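/- arXiv:1908.05406 — 2 statements merged into one kernel-verified Lean document; each statement's English description precedes it below -/
import Mathlib

section
/- Let X be a real Hilbert space, U a closed linear subspace, g : X → (−∞,+∞] proper lower semicontinuous convex, T = Id − P_U + Prox_g ∘ R_U, and v = P_{closure(ran(Id−T))}(0). Assume: v = P_{closure(U − dom g)}(0) (hence v ∈ U^⊥); 0 ∈ U^⊥ + dom g*; Z = {x : v ∈ N_U(x) + ∂g(x − v)} is nonempty; and the projector P_Z is weak-to-weak continuous. Let x ∈ X and set y(x) = lim_{n→∞} P_F(nv + T^n x), where F = {z : z = T(z + v)} (this limit exists). Then: P_U T^n x converges weakly to P_U y(x), which is a minimizer of g(· − v) over U; T^{n+1} x − T^n x + P_U T^n x = Prox_g(R_U T^n x) converges weakly to −v + P_U y(x); and g(Prox_g(R_U T^n x)) → min{g(u − v) : u ∈ U}. -/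
open scoped RealInnerProductSpace Pointwise
open Filter Topology

noncomputable section

variable {X : Type*}

section Defs
variable [NormedAddCommGroup X] [InnerProductSpace ℝ X]

/-- `p` is the metric projection of `x` onto `S`: `p ∈ S` and
`⟪s − p, x − p⟫ ≤ 0` for all `s ∈ S`. -/
def IsMetricProj (S : Set X) (x p : X) : Prop :=
  p ∈ S ∧ ∀ s ∈ S, ⟪s - p, x - p⟫ ≤ (0 : ℝ)

/-- a function `X → (−∞,+∞]` is proper: never `−∞` and somewhere finite. -/
def EProper (g : X → EReal) : Prop :=
  (∀ x, g x ≠ ⊥) ∧ ∃ x, g x ≠ ⊤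

/-- convexity for extended-real-valued functions. -/
def EConvexOn (g : X → EReal) : Prop :=
  ∀ x y : X, ∀ a b : ℝ, 0 ≤ a → 0 ≤ b → a + b = 1 →
    g (a • x + b • y) ≤ (a : EReal) * g x + (b : EReal) * g y

/-- the convex subdifferential `∂g(x)`. -/
def ESubdiff (g : X → EReal) (x : X) : Set X :=
  {xs | ∀ z : X, g x + ((⟪z - x, xs⟫ : ℝ) : EReal) ≤ g z}

/-- the Fenchel conjugate `g*`. -/
def EConj (g : X → EReal) (xs : X) : EReal :=
  ⨆ x : X, ((⟪x, xs⟫ : ℝ) : EReal) - g x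

/-- `prox` is the proximal mapping of `g`: `prox x` minimizes
`y ↦ g y + ‖y − x‖²/2`. -/
def IsProx (g : X → EReal) (prox : X → X) : Prop :=
  ∀ x y : X,
    g (prox x) + ((‖prox x - x‖ ^ 2 / 2 : ℝ) : EReal) ≤
      g y + ((‖y - x‖ ^ 2 / 2 : ℝ) : EReal)

/-- the normal cone operator of a closed linear subspace:
`N_U(x) = U^⊥` if `x ∈ U`, and `∅` otherwise. -/
def normalCone (U : Submodule ℝ X) (x : X) : Set X :=
  {u | x ∈ U ∧ u ∈ Uᗮ}

/-- `c` is a weak cluster point of the sequence `s`, i.e. the weak limit of a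
subsequence of `s`. -/
def IsWeakClusterPt (s : ℕ → X) (c : X) : Prop :=
  ∃ φ : ℕ → ℕ, StrictMono φ ∧
    ∀ w : X, Tendsto (fun k => (⟪s (φ k), w⟫ : ℝ)) atTop (𝓝 ⟪c, w⟫)

end Defs

section Aux
set_option linter.unusedSectionVars false
set_option maxHeartbeats 1000000
variable [NormedAddCommGroup X] [InnerProductSpace ℝ X]

lemma metricProj_unique {S : Set X} {x p q : X}
    (hp : IsMetricProj S x p) (hq : IsMetricProj S x q) : p = q := by
  have h1 := hp.2 q hq.1
  have h2 := hq.2 p hp.1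
  have h3 : ⟪q - p, (x - p) - (x - q)⟫ ≤ 0 := by
    rw [inner_sub_right]
    have : ⟪p - q, x - q⟫ = -⟪q - p, x - q⟫ := by
      rw [show p - q = -(q - p) by abel, inner_neg_left]
    linarith [h2, this ▸ h2]
  have h4 : (x - p) - (x - q) = q - p := by abel
  rw [h4, real_inner_self_eq_norm_sq] at h3
  have : ‖q - p‖ = 0 := by nlinarith [norm_nonneg (q - p)]
  have := norm_eq_zero.mp this
  rw [sub_eq_zero] at this
  exact this.symm

namespace DRaux

lemma efin {g : X → EReal} (hp : EProper g) {w : X} (h : g w ≠ ⊤) :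
    g w = ((g w).toReal : EReal) := (EReal.coe_toReal h (hp.1 w)).symm

lemma prox_ne_top {g : X → EReal} (hp : EProper g) {prox : X → X} (hprox : IsProx g prox)
    (q : X) : g (prox q) ≠ ⊤ := by
  obtain ⟨x0, hx0⟩ := hp.2
  intro htop
  have h := hprox q x0
  rw [htop, EReal.top_add_coe] at h
  have : g x0 + ((‖x0 - q‖ ^ 2 / 2 : ℝ) : EReal) ≠ ⊤ := by
    rw [efin hp hx0, ← EReal.coe_add]; exact EReal.coe_ne_top _
  exact this (top_le_iff.mp h)

/-- real form of the prox inequality against a finite point -/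
lemma prox_real {g : X → EReal} (hp : EProper g) {prox : X → X} (hprox : IsProx g prox)
    {q z : X} (hz : g z ≠ ⊤) :
    (g (prox q)).toReal + ‖prox q - q‖ ^ 2 / 2 ≤ (g z).toReal + ‖z - q‖ ^ 2 / 2 := by
  have h := hprox q z
  rw [efin hp (prox_ne_top hp hprox q), efin hp hz, ← EReal.coe_add, ← EReal.coe_add,
    EReal.coe_le_coe_iff] at h
  exact h

/-- the subgradient inequality at prox points, real form -/
lemma prox_subgrad_real {g : X → EReal} (hp : EProper g) (hc : EConvexOn g)
    {prox : X → X} (hprox : IsProx g prox) {q z : X} (hz : g z ≠ ⊤) :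
    (g (prox q)).toReal + ⟪z - prox q, q - prox q⟫ ≤ (g z).toReal := by
  set p := prox q with hp'
  set gp := (g p).toReal
  set gz := (g z).toReal
  have key : ∀ t : ℝ, 0 < t → t ≤ 1 → gp + ⟪z - p, q - p⟫ ≤ gz + t * (‖z - p‖ ^ 2 / 2) := by
    intro t ht0 ht1
    set yt := p + t • (z - p) with hyt
    have hcomb : (1 - t) • p + t • z = yt := by rw [hyt]; module
    have hconv := hc p z (1 - t) t (by linarith) ht0.le (by ring)
    rw [hcomb] at hconv
    have hgyub : g yt ≤ (((1 - t) * gp + t * gz : ℝ) : EReal) := by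
      rw [EReal.coe_add, EReal.coe_mul, EReal.coe_mul]
      rw [efin hp (prox_ne_top hp hprox q)] at hconv
      rw [efin hp hz] at hconv
      exact hconv
    have hgyt : g yt ≠ ⊤ := fun h => by
      rw [h] at hgyub; exact (EReal.coe_ne_top _) (top_le_iff.mp hgyub)
    have hgyr : (g yt).toReal ≤ (1 - t) * gp + t * gz := by
      rw [efin hp hgyt, EReal.coe_le_coe_iff] at hgyub; exact hgyub
    have h1 : gp + ‖p - q‖ ^ 2 / 2 ≤ (g yt).toReal + ‖yt - q‖ ^ 2 / 2 := prox_real hp hprox hgyt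
    have hnorm : ‖yt - q‖ ^ 2 = ‖p - q‖ ^ 2 + 2 * (t * ⟪p - q, z - p⟫) + t ^ 2 * ‖z - p‖ ^ 2 := by
      have he : yt - q = (p - q) + t • (z - p) := by rw [hyt]; abel
      rw [he, norm_add_sq_real, real_inner_smul_right, norm_smul, Real.norm_eq_abs,
        mul_pow, sq_abs]
    have hip : ⟪z - p, q - p⟫ = -⟪p - q, z - p⟫ := by
      rw [real_inner_comm, show q - p = -(p - q) by abel, inner_neg_left]
    have h2 : t * (gp + ⟪z - p, q - p⟫) ≤ t * (gz + t * (‖z - p‖ ^ 2 / 2)) := by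
      rw [hip]; nlinarith [h1, hgyr, hnorm]
    exact le_of_mul_le_mul_left h2 ht0
  have hlim : Tendsto (fun n : ℕ => gz + (1 / (n + 1 : ℝ)) * (‖z - p‖ ^ 2 / 2)) atTop (𝓝 gz) := by
    have := (tendsto_one_div_add_atTop_nhds_zero_nat).mul_const (‖z - p‖ ^ 2 / 2)
    simpa using tendsto_const_nhds.add this
  refine ge_of_tendsto' hlim fun n => key (1 / (n + 1 : ℝ)) ?_ ?_
  · positivity
  · rw [div_le_one (by positivity)]; linarith [Nat.cast_nonneg (α := ℝ) n]

/-- the subgradient inequality at prox points, EReal form -/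
lemma prox_subgrad {g : X → EReal} (hp : EProper g) (hc : EConvexOn g)
    {prox : X → X} (hprox : IsProx g prox) (q z : X) :
    g (prox q) + ((⟪z - prox q, q - prox q⟫ : ℝ) : EReal) ≤ g z := by
  by_cases hz : g z = ⊤
  · rw [hz]; exact le_top
  · rw [efin hp (prox_ne_top hp hprox q), efin hp hz, ← EReal.coe_add, EReal.coe_le_coe_iff]
    exact prox_subgrad_real hp hc hprox hz

/-- firm nonexpansiveness of prox -/
lemma prox_firm {g : X → EReal} (hp : EProper g) (hc : EConvexOn g)
    {prox : X → X} (hprox : IsProx g prox) (q1 q2 : X) :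
    ‖prox q1 - prox q2‖ ^ 2 ≤ ⟪prox q1 - prox q2, q1 - q2⟫ := by
  set p1 := prox q1
  set p2 := prox q2
  have h1 : (g p1).toReal + ⟪p2 - p1, q1 - p1⟫ ≤ (g p2).toReal :=
    prox_subgrad_real hp hc hprox (prox_ne_top hp hprox q2)
  have h2 : (g p2).toReal + ⟪p1 - p2, q2 - p2⟫ ≤ (g p1).toReal :=
    prox_subgrad_real hp hc hprox (prox_ne_top hp hprox q1)
  have hsum : ⟪p2 - p1, q1 - p1⟫ + ⟪p1 - p2, q2 - p2⟫ ≤ 0 := by linarith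
  have hexp : ⟪p2 - p1, q1 - p1⟫ + ⟪p1 - p2, q2 - p2⟫
      = ⟪p1 - p2, p1 - p2⟫ - ⟪p1 - p2, q1 - q2⟫ := by
    simp only [inner_sub_left, inner_sub_right]
    rw [real_inner_comm p2 p1]; ring
  rw [hexp, real_inner_self_eq_norm_sq] at hsum
  linarith

/-- if b is a subgradient of g at q then prox (q + b) = q -/
lemma prox_eq_of_subgrad {g : X → EReal} (hp : EProper g) (hc : EConvexOn g)
    {prox : X → X} (hprox : IsProx g prox) {q b : X}
    (hb : ∀ z : X, g q + ((⟪z - q, b⟫ : ℝ) : EReal) ≤ g z) : prox (q + b) = q := by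
  obtain ⟨x0, hx0⟩ := hp.2
  have hgq : g q ≠ ⊤ := by
    intro htop
    have h := hb x0
    rw [htop, EReal.top_add_coe] at h
    exact hx0 (top_le_iff.mp h)
  set p := prox (q + b) with hpdef
  have h1 : (g p).toReal + ⟪q - p, (q + b) - p⟫ ≤ (g q).toReal :=
    prox_subgrad_real hp hc hprox hgq
  have h2 : (g q).toReal + ⟪p - q, b⟫ ≤ (g p).toReal := by
    have h := hb p
    rw [efin hp hgq, efin hp (prox_ne_top hp hprox (q + b)), ← EReal.coe_add,
      EReal.coe_le_coe_iff] at h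
    exact h
  have hexp : ⟪q - p, (q + b) - p⟫ + ⟪p - q, b⟫ = ⟪q - p, q - p⟫ := by
    simp only [inner_sub_left, inner_add_right, inner_sub_right]
    rw [real_inner_comm p q]; ring
  rw [real_inner_self_eq_norm_sq] at hexp
  have : ‖q - p‖ ^ 2 ≤ 0 := by linarith
  have hqp : ‖q - p‖ = 0 := by nlinarith [norm_nonneg (q - p)]
  have := norm_eq_zero.mp hqp
  rw [sub_eq_zero] at this
  exact this.symm

section Tfacts

variable {U : Submodule ℝ X} [Submodule.HasOrthogonalProjection U]
variable {g : X → EReal} {prox PU RU T : X → X} {v : X}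

lemma PU_norm_le (hPU : ∀ z, PU z = (U.orthogonalProjectionOnto z : X)) (a : X) :
    ‖PU a‖ ≤ ‖a‖ := by
  rw [hPU]
  calc ‖(U.orthogonalProjectionOnto a : X)‖ ≤ ‖U.orthogonalProjectionOnto‖ * ‖a‖ := by
        simpa using (U.orthogonalProjectionOnto).le_opNorm a
    _ ≤ 1 * ‖a‖ := mul_le_mul_of_nonneg_right (U.orthogonalProjectionOnto_norm_le) (norm_nonneg a)
    _ = ‖a‖ := one_mul _

lemma PU_sub (hPU : ∀ z, PU z = (U.orthogonalProjectionOnto z : X)) (a b : X) :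
    PU (a - b) = PU a - PU b := by simp [hPU, map_sub]

lemma PU_add (hPU : ∀ z, PU z = (U.orthogonalProjectionOnto z : X)) (a b : X) :
    PU (a + b) = PU a + PU b := by simp [hPU, map_add]

lemma PU_smul (hPU : ∀ z, PU z = (U.orthogonalProjectionOnto z : X)) (c : ℝ) (a : X) :
    PU (c • a) = c • PU a := by simp [hPU, map_smul]

lemma PU_mem (hPU : ∀ z, PU z = (U.orthogonalProjectionOnto z : X)) (a : X) : PU a ∈ U := by
  rw [hPU]; exact (U.orthogonalProjectionOnto a).2

lemma PU_perp (hPU : ∀ z, PU z = (U.orthogonalProjectionOnto z : X)) (a : X) : a - PU a ∈ Uᗮ := by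
  rw [hPU]; exact Submodule.sub_starProjection_mem_orthogonal (K := U) a

lemma PU_of_perp (hPU : ∀ z, PU z = (U.orthogonalProjectionOnto z : X)) {a : X} (ha : a ∈ Uᗮ) :
    PU a = 0 := by
  rw [hPU, Submodule.orthogonalProjectionOnto_apply_of_mem_orthogonal ha,
    Submodule.coe_zero]

lemma PU_inner_self (hPU : ∀ z, PU z = (U.orthogonalProjectionOnto z : X)) (a : X) :
    ⟪PU a, a⟫ = ‖PU a‖ ^ 2 := by
  have h0 : ⟪PU a, a - PU a⟫ = 0 :=
    Submodule.inner_right_of_mem_orthogonal (PU_mem hPU a) (PU_perp hPU a)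
  have := inner_sub_right (𝕜 := ℝ) (PU a) a (PU a)
  rw [h0, real_inner_self_eq_norm_sq] at this
  linarith

/-- `R_U` shrinks distances (is an isometry on differences). -/
lemma RU_norm (hPU : ∀ z, PU z = (U.orthogonalProjectionOnto z : X))
    (hRU : ∀ z, RU z = 2 • PU z - z) (a b : X) : ‖RU a - RU b‖ = ‖a - b‖ := by
  have hd : RU a - RU b = 2 • PU (a - b) - (a - b) := by
    rw [hRU, hRU, PU_sub hPU]; module
  have h2 : ‖2 • PU (a - b) - (a - b)‖ ^ 2 = ‖a - b‖ ^ 2 := by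
    rw [show (2 : ℕ) • PU (a - b) = (2 : ℝ) • PU (a - b) by module, norm_sub_sq_real,
      real_inner_smul_left, PU_inner_self hPU, norm_smul, Real.norm_eq_abs, mul_pow, sq_abs]
    ring
  rw [hd]
  nlinarith [norm_nonneg (2 • PU (a - b) - (a - b)), norm_nonneg (a - b), h2]

lemma parallelogram_aux (w m : X) :
    ‖w + m‖ ^ 2 + ‖w - m‖ ^ 2 = 2 * ‖w‖ ^ 2 + 2 * ‖m‖ ^ 2 := by
  rw [norm_add_sq_real, norm_sub_sq_real]; ring

lemma norm_two_smul_sq (x : X) : ‖(2:ℕ) • x‖ ^ 2 = 4 * ‖x‖ ^ 2 := by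
  rw [show (2:ℕ) • x = (2:ℝ) • x from by module, norm_smul, Real.norm_eq_abs, mul_pow, sq_abs]
  ring

/-- firm nonexpansiveness of the Douglas–Rachford operator. -/
lemma T_firm (hgproper : EProper g) (hgconv : EConvexOn g) (hprox : IsProx g prox)
    (hPU : ∀ z, PU z = (U.orthogonalProjectionOnto z : X))
    (hRU : ∀ z, RU z = 2 • PU z - z)
    (hT : ∀ z, T z = z - PU z + prox (RU z)) (a b : X) :
    ‖T a - T b‖ ^ 2 + ‖(a - T a) - (b - T b)‖ ^ 2 ≤ ‖a - b‖ ^ 2 := by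
  have hTN : ∀ z : X, 2 • T z = z + (2 • prox (RU z) - RU z) := by
    intro z; rw [hT, hRU]; module
  have hNa : 2 • prox (RU a) - RU a = 2 • T a - a := by rw [hTN a]; abel
  have hNb : 2 • prox (RU b) - RU b = 2 • T b - b := by rw [hTN b]; abel
  have e1 : (a - b) + ((2 • prox (RU a) - RU a) - (2 • prox (RU b) - RU b))
      = 2 • (T a - T b) := by rw [hNa, hNb]; module
  have e2 : (a - b) - ((2 • prox (RU a) - RU a) - (2 • prox (RU b) - RU b))
      = 2 • ((a - T a) - (b - T b)) := by rw [hNa, hNb]; module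
  have hmw : ‖(2 • prox (RU a) - RU a) - (2 • prox (RU b) - RU b)‖ ^ 2 ≤ ‖a - b‖ ^ 2 := by
    have hfirm := prox_firm hgproper hgconv hprox (RU a) (RU b)
    have hRn2 : ‖RU a - RU b‖ ^ 2 = ‖a - b‖ ^ 2 := by rw [RU_norm hPU hRU a b]
    have hexp : ‖(2 • prox (RU a) - RU a) - (2 • prox (RU b) - RU b)‖ ^ 2
        = 4 * ‖prox (RU a) - prox (RU b)‖ ^ 2
          - 4 * ⟪prox (RU a) - prox (RU b), RU a - RU b⟫ + ‖RU a - RU b‖ ^ 2 := by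
      have hh : (2 • prox (RU a) - RU a) - (2 • prox (RU b) - RU b)
          = (2:ℝ) • (prox (RU a) - prox (RU b)) - (RU a - RU b) := by module
      rw [hh, norm_sub_sq_real, real_inner_smul_left, norm_smul, Real.norm_eq_abs,
        mul_pow, sq_abs]
      ring
    linarith [hfirm, hexp, hRn2]
  have par := parallelogram_aux (a - b) ((2 • prox (RU a) - RU a) - (2 • prox (RU b) - RU b))
  rw [e1, e2, norm_two_smul_sq, norm_two_smul_sq] at par
  linarith [par, hmw]

lemma T_lip (hgproper : EProper g) (hgconv : EConvexOn g) (hprox : IsProx g prox)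
    (hPU : ∀ z, PU z = (U.orthogonalProjectionOnto z : X))
    (hRU : ∀ z, RU z = 2 • PU z - z)
    (hT : ∀ z, T z = z - PU z + prox (RU z)) (a b : X) :
    ‖T a - T b‖ ≤ ‖a - b‖ := by
  have h := T_firm hgproper hgconv hprox hPU hRU hT a b
  nlinarith [norm_nonneg (T a - T b), norm_nonneg (a - b),
    sq_nonneg ‖(a - T a) - (b - T b)‖]

lemma T_cont (hgproper : EProper g) (hgconv : EConvexOn g) (hprox : IsProx g prox)
    (hPU : ∀ z, PU z = (U.orthogonalProjectionOnto z : X))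
    (hRU : ∀ z, RU z = 2 • PU z - z)
    (hT : ∀ z, T z = z - PU z + prox (RU z)) : Continuous T := by
  have : LipschitzWith 1 T := by
    refine LipschitzWith.of_dist_le_mul fun a b => ?_
    rw [dist_eq_norm, dist_eq_norm, NNReal.coe_one, one_mul]
    exact T_lip hgproper hgconv hprox hPU hRU hT a b
  exact this.continuous

end Tfacts

lemma weak_compact_subseq [CompleteSpace X] (b : ℕ → X) (M : ℝ) (hM : 0 ≤ M)
    (hb : ∀ n, ‖b n‖ ≤ M) :
    ∃ (φ : ℕ → ℕ) (c : X), StrictMono φ ∧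
      ∀ d : X, Tendsto (fun k => ⟪b (φ k), d⟫) atTop (𝓝 ⟪c, d⟫) := by
  obtain ⟨𝒰, h𝒰⟩ := Filter.exists_ultrafilter_le (atTop : Filter ℕ)
  -- ultrafilter limits of inner products
  have hbound : ∀ (d : X) (n : ℕ), |⟪b n, d⟫| ≤ M * ‖d‖ := fun d n =>
    le_trans (abs_real_inner_le_norm (b n) d)
      (mul_le_mul_of_nonneg_right (hb n) (norm_nonneg d))
  have hlim : ∀ d : X, ∃ L : ℝ, Tendsto (fun n => ⟪b n, d⟫) (𝒰 : Filter ℕ) (𝓝 L) := by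
    intro d
    have hmem : ∀ n, ⟪b n, d⟫ ∈ Set.Icc (-(M * ‖d‖)) (M * ‖d‖) := by
      intro n; rw [Set.mem_Icc]; constructor
      · linarith [(abs_le.mp (hbound d n)).1]
      · exact (abs_le.mp (hbound d n)).2
    have hle : ↑(𝒰.map fun n => ⟪b n, d⟫) ≤ 𝓟 (Set.Icc (-(M * ‖d‖)) (M * ‖d‖)) := by
      rw [Ultrafilter.coe_map]
      exact Filter.le_principal_iff.mpr (Filter.mem_map.mpr (Filter.univ_mem' hmem))
    obtain ⟨L, _, hL⟩ := isCompact_Icc.ultrafilter_le_nhds _ hle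
    exact ⟨L, by rwa [Ultrafilter.coe_map] at hL⟩
  choose L hL using hlim
  have hLadd : ∀ d d' : X, L (d + d') = L d + L d' := by
    intro d d'
    refine tendsto_nhds_unique ?_ ((hL d).add (hL d'))
    have : (fun n => ⟪b n, d + d'⟫) = fun n => ⟪b n, d⟫ + ⟪b n, d'⟫ := by
      funext n; exact inner_add_right _ _ _
    rw [← this]; exact hL (d + d')
  have hLsmul : ∀ (r : ℝ) (d : X), L (r • d) = r * L d := by
    intro r d
    refine tendsto_nhds_unique ?_ ((hL d).const_mul r)
    have : (fun n => ⟪b n, r • d⟫) = fun n => r * ⟪b n, d⟫ := by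
      funext n; exact real_inner_smul_right _ _ _
    rw [← this]; exact hL (r • d)
  have hLbound : ∀ d : X, |L d| ≤ M * ‖d‖ := by
    intro d
    exact le_of_tendsto' (hL d).abs fun n => hbound d n
  -- the representing vector
  set ℓ : X →ₗ[ℝ] ℝ :=
    { toFun := L
      map_add' := hLadd
      map_smul' := hLsmul } with hℓ
  set c0 : X →L[ℝ] ℝ := LinearMap.mkContinuous ℓ M (fun d => by
    rw [Real.norm_eq_abs]; exact hLbound d) with hc0
  set c : X := (InnerProductSpace.toDual ℝ X).symm c0 with hcdef
  have hc : ∀ d : X, ⟪c, d⟫ = L d := by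
    intro d
    rw [hcdef]
    exact InnerProductSpace.toDual_symm_apply
  -- choice of a diagonal subsequence
  have hS : ∀ k : ℕ, ∀ᶠ n in (𝒰 : Filter ℕ),
      ∀ j ≤ k, |⟪b n, b j⟫ - L (b j)| < 1 / ((k : ℝ) + 1) := by
    intro k
    have h1 : ∀ j : ℕ, ∀ᶠ n in (𝒰 : Filter ℕ), |⟪b n, b j⟫ - L (b j)| < 1 / ((k : ℝ) + 1) := by
      intro j
      have hε : (0 : ℝ) < 1 / ((k : ℝ) + 1) := by positivity
      have := Metric.tendsto_nhds.mp (hL (b j)) _ hε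
      simpa [Real.dist_eq] using this
    have h2 : ∀ᶠ n in (𝒰 : Filter ℕ), ∀ j ∈ Finset.range (k + 1),
        |⟪b n, b j⟫ - L (b j)| < 1 / ((k : ℝ) + 1) :=
      (Filter.eventually_all_finset _).mpr fun j _ => h1 j
    filter_upwards [h2] with n hn j hj
    exact hn j (Finset.mem_range.mpr (Nat.lt_succ_of_le hj))
  have hSne : ∀ k m : ℕ, ∃ n, m < n ∧ ∀ j ≤ k, |⟪b n, b j⟫ - L (b j)| < 1 / ((k : ℝ) + 1) := by
    intro k m
    have h1 : ∀ᶠ n in (𝒰 : Filter ℕ), m < n := h𝒰 (eventually_gt_atTop m)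
    exact (h1.and (hS k)).exists
  set φ : ℕ → ℕ := fun k =>
    Nat.rec (hSne 0 0).choose (fun k ih => (hSne (k + 1) ih).choose) k with hφdef
  have hφs : ∀ k, φ (k + 1) = (hSne (k + 1) (φ k)).choose := fun k => rfl
  have hφmono : StrictMono φ := by
    apply strictMono_nat_of_lt_succ
    intro k
    rw [hφs k]
    exact (hSne (k + 1) (φ k)).choose_spec.1
  have hφS : ∀ k, ∀ j ≤ k, |⟪b (φ k), b j⟫ - L (b j)| < 1 / ((k : ℝ) + 1) := by
    intro k
    cases k with
    | zero => exact (hSne 0 0).choose_spec.2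
    | succ k => rw [hφs k]; exact (hSne (k + 1) (φ k)).choose_spec.2
  -- convergence against the generators
  have hgen : ∀ j, Tendsto (fun k => ⟪b (φ k), b j⟫) atTop (𝓝 (L (b j))) := by
    intro j
    rw [Metric.tendsto_atTop]
    intro ε hε
    obtain ⟨K, hK⟩ := exists_nat_one_div_lt hε
    refine ⟨max j K, fun k hk => ?_⟩
    have hjk : j ≤ k := le_trans (le_max_left _ _) hk
    have hKk : (K : ℝ) ≤ (k : ℝ) := Nat.cast_le.mpr (le_trans (le_max_right _ _) hk)
    have h1 := hφS k j hjk
    rw [Real.dist_eq]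
    have h2 : 1 / ((k : ℝ) + 1) ≤ 1 / ((K : ℝ) + 1) := by
      apply one_div_le_one_div_of_le <;> linarith [Nat.cast_nonneg (α := ℝ) K]
    linarith
  -- the closed subspace generated by the sequence
  set Y : Submodule ℝ X := (Submodule.span ℝ (Set.range b)).topologicalClosure with hYdef
  haveI : CompleteSpace Y := (Submodule.isClosed_topologicalClosure _).completeSpace_coe
  have hbY : ∀ n, b n ∈ Y := fun n =>
    Submodule.le_topologicalClosure _ (Submodule.subset_span ⟨n, rfl⟩)
  have hcL : ∀ d : X, ⟪c, d⟫ = L d := hc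
  have hspan : ∀ d ∈ Submodule.span ℝ (Set.range b),
      Tendsto (fun k => ⟪b (φ k), d⟫) atTop (𝓝 (⟪c, d⟫)) := by
    intro d hd
    induction hd using Submodule.span_induction with
    | mem z hz =>
      obtain ⟨j, rfl⟩ := hz
      rw [hcL]
      exact hgen j
    | zero => simpa using tendsto_const_nhds
    | add z w _ _ hz hw =>
      have : (fun k => ⟪b (φ k), z + w⟫) = fun k => ⟪b (φ k), z⟫ + ⟪b (φ k), w⟫ := by
        funext k; exact inner_add_right _ _ _
      rw [this, inner_add_right]
      exact hz.add hw
    | smul r z _ hz =>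
      have : (fun k => ⟪b (φ k), r • z⟫) = fun k => r * ⟪b (φ k), z⟫ := by
        funext k; exact real_inner_smul_right _ _ _
      rw [this, real_inner_smul_right]
      exact hz.const_mul r
  have hnc : ‖c‖ ≤ M := by
    have h1 : ‖c‖ ^ 2 = ⟪c, c⟫ := (real_inner_self_eq_norm_sq c).symm
    have h2 : |⟪c, c⟫| ≤ M * ‖c‖ := by rw [hcL]; exact hLbound c
    nlinarith [norm_nonneg c, abs_nonneg ⟪c, c⟫, le_abs_self ⟪c, c⟫]
  have hY : ∀ d ∈ Y, Tendsto (fun k => ⟪b (φ k), d⟫) atTop (𝓝 (⟪c, d⟫)) := by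
    intro d hd
    rw [Metric.tendsto_atTop]
    intro ε hε
    have hd' : d ∈ closure (Submodule.span ℝ (Set.range b) : Set X) := hd
    rw [Metric.mem_closure_iff] at hd'
    obtain ⟨d', hd'mem, hdd'⟩ := hd' (ε / (3 * (M + 1))) (by positivity)
    have h1 := hspan d' hd'mem
    rw [Metric.tendsto_atTop] at h1
    obtain ⟨K, hK⟩ := h1 (ε / 3) (by positivity)
    refine ⟨K, fun k hk => ?_⟩
    have h2 := hK k hk
    rw [Real.dist_eq] at h2 ⊢
    have e1 : ⟪b (φ k), d⟫ - ⟪c, d⟫ =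
        (⟪b (φ k), d - d'⟫) + (⟪b (φ k), d'⟫ - ⟪c, d'⟫) + (⟪c, d' - d⟫) := by
      rw [inner_sub_right, inner_sub_right]; ring
    have e2 : |⟪b (φ k), d - d'⟫| ≤ M * ‖d - d'‖ := hbound _ _
    have e3 : |⟪c, d' - d⟫| ≤ M * ‖d' - d‖ :=
      le_trans (abs_real_inner_le_norm c (d' - d))
        (mul_le_mul_of_nonneg_right hnc (norm_nonneg _))
    have e4 : ‖d - d'‖ < ε / (3 * (M + 1)) := by
      rw [← dist_eq_norm]; exact hdd'
    have e5 : ‖d' - d‖ < ε / (3 * (M + 1)) := by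
      rw [← dist_eq_norm, dist_comm]; exact hdd'
    have e6 : M * ‖d - d'‖ ≤ ε / 3 := by
      have : M * ‖d - d'‖ ≤ M * (ε / (3 * (M + 1))) :=
        mul_le_mul_of_nonneg_left e4.le hM
      calc M * ‖d - d'‖ ≤ M * (ε / (3 * (M + 1))) := this
        _ ≤ ε / 3 := by
          rw [← mul_div_assoc, div_le_div_iff₀ (by positivity) (by norm_num : (0:ℝ) < 3)]
          nlinarith
    have e7 : M * ‖d' - d‖ ≤ ε / 3 := by
      have : M * ‖d' - d‖ ≤ M * (ε / (3 * (M + 1))) :=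
        mul_le_mul_of_nonneg_left e5.le hM
      calc M * ‖d' - d‖ ≤ M * (ε / (3 * (M + 1))) := this
        _ ≤ ε / 3 := by
          rw [← mul_div_assoc, div_le_div_iff₀ (by positivity) (by norm_num : (0:ℝ) < 3)]
          nlinarith
    calc |⟪b (φ k), d⟫ - ⟪c, d⟫| ≤
        |⟪b (φ k), d - d'⟫| + |⟪b (φ k), d'⟫ - ⟪c, d'⟫| + |⟪c, d' - d⟫| := by
          rw [e1]; exact (abs_add_le _ _).trans (by linarith [abs_add_le (⟪b (φ k), d - d'⟫) (⟪b (φ k), d'⟫ - ⟪c, d'⟫)])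
      _ < ε := by linarith
  -- c belongs to Y
  have hcY : c ∈ Y := by
    have h1 : c ∈ Yᗮᗮ := by
      rw [Submodule.mem_orthogonal]
      intro e he
      have h2 : ∀ n, ⟪b n, e⟫ = 0 := fun n =>
        Submodule.inner_right_of_mem_orthogonal (hbY n) he
      have h3 : L e = 0 := by
        refine tendsto_nhds_unique (hL e) ?_
        have h4 : (fun n : ℕ => ⟪b n, e⟫) = fun _ => (0 : ℝ) := funext h2
        rw [h4]; exact tendsto_const_nhds
      rw [real_inner_comm, hcL, h3]
    rwa [Submodule.orthogonal_orthogonal] at h1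
  -- conclusion
  refine ⟨φ, c, hφmono, fun d => ?_⟩
  have hsplit : ∀ u : X, u ∈ Y → ⟪u, d⟫ = ⟪u, (Y.orthogonalProjectionOnto d : X)⟫ := by
    intro u hu
    have : ⟪u, d - (Y.orthogonalProjectionOnto d : X)⟫ = 0 :=
      Submodule.inner_right_of_mem_orthogonal hu (Submodule.sub_starProjection_mem_orthogonal (K := Y) d)
    have h4 := inner_sub_right (𝕜 := ℝ) u d (Y.orthogonalProjectionOnto d : X)
    rw [this] at h4
    linarith
  have h5 : (fun k => ⟪b (φ k), d⟫) = fun k => ⟪b (φ k), (Y.orthogonalProjectionOnto d : X)⟫ := by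
    funext k; exact hsplit _ (hbY _)
  rw [h5, hsplit c hcY]
  exact hY _ (Y.orthogonalProjectionOnto d).2


end DRaux
end Aux



set_option maxHeartbeats 4000000 in
set_option linter.unusedSectionVars false in
/-- **main result.** Under the standing assumptions
(`v = P_{closure(U − dom g)} 0 = P_{closure(ran(Id−T))} 0 ∈ U^⊥`,
`0 ∈ U^⊥ + dom g*`, `Z ≠ ∅`, `P_Z` weak-to-weak continuous), with
`y(x) = lim_n P_F(nv + Tⁿx)`:
the shadow sequence `P_U Tⁿx` converges weakly to `P_U y(x)`, which minimizes
`g(· − v)` over `U`; `Tⁿ⁺¹x − Tⁿx + P_U Tⁿx = Prox_g(R_U Tⁿx)` converges weakly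
to `−v + P_U y(x)`; and `g(Prox_g(R_U Tⁿx)) → min (ι_U + g(· − v))`. -/
theorem DR_main_result
    [NormedAddCommGroup X] [InnerProductSpace ℝ X] [CompleteSpace X]
    (U : Submodule ℝ X) (hUclosed : IsClosed (U : Set X)) [U.HasOrthogonalProjection]
    (g : X → EReal) (hgproper : EProper g) (hglsc : LowerSemicontinuous g)
    (hgconv : EConvexOn g)
    (prox : X → X) (hprox : IsProx g prox)
    (PU RU T : X → X)
    (hPU : ∀ z, PU z = (U.orthogonalProjectionOnto z : X))
    (hRU : ∀ z, RU z = 2 • PU z - z)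
    (hT : ∀ z, T z = z - PU z + prox (RU z))
    (v : X)
    (hv : IsMetricProj (closure (Set.range fun z => z - T z)) 0 v)
    (hvgap : IsMetricProj (closure ((U : Set X) - {z | g z ≠ ⊤})) 0 v)
    (hvU : v ∈ Uᗮ)
    (hCQ : ∃ u w : X, u ∈ Uᗮ ∧ EConj g w ≠ ⊤ ∧ u + w = 0)
    (Z : Set X)
    (hZ : Z = {z | ∃ a b : X, a ∈ normalCone U z ∧ b ∈ ESubdiff g (z - v) ∧ v = a + b})
    (hZne : Z.Nonempty)
    (PZ : X → X) (hPZ : ∀ w : X, IsMetricProj Z w (PZ w))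
    (hPZweak : ∀ (s : ℕ → X) (a : X),
      (∀ w : X, Tendsto (fun n => (⟪s n, w⟫ : ℝ)) atTop (𝓝 ⟪a, w⟫)) →
      ∀ w : X, Tendsto (fun n => (⟪PZ (s n), w⟫ : ℝ)) atTop (𝓝 ⟪PZ a, w⟫))
    (F : Set X) (hF : F = {z | z = T (z + v)})
    (PF : X → X) (hPF : ∀ w : X, IsMetricProj F w (PF w))
    (x y : X)
    (hy : Tendsto (fun n : ℕ => PF ((n : ℝ) • v + T^[n] x)) atTop (𝓝 y)) :
    -- the shadow sequence converges weakly to `P_U y`, a minimizer of `g(·−v)` over `U`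
    (∀ w : X, Tendsto (fun n : ℕ => (⟪PU (T^[n] x), w⟫ : ℝ)) atTop (𝓝 ⟪PU y, w⟫)) ∧
    PU y ∈ U ∧ (∀ u ∈ U, g (PU y - v) ≤ g (u - v)) ∧
    -- identity and weak convergence of `Prox_g (R_U Tⁿ x)`
    (∀ n : ℕ, T^[n+1] x - T^[n] x + PU (T^[n] x) = prox (RU (T^[n] x))) ∧
    (∀ w : X, Tendsto (fun n : ℕ => (⟪prox (RU (T^[n] x)), w⟫ : ℝ)) atTop
      (𝓝 ⟪-v + PU y, w⟫)) ∧
    -- the function values converge to the minimum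
    Tendsto (fun n : ℕ => g (prox (RU (T^[n] x)))) atTop
      (𝓝 (⨅ u : U, g ((u : X) - v))) := by
  classical
  have hgbot : ∀ z, g z ≠ ⊥ := hgproper.1
  -- abbreviations
  set s : ℕ → X := fun n => T^[n] x with hsdef
  set yq : ℕ → X := fun n => (n : ℝ) • v + s n with hyqdef
  set δ : ℕ → X := fun n => yq (n + 1) - yq n with hδdef
  set u : ℕ → X := fun n => PU (s n) with hudef
  set p : ℕ → X := fun n => prox (RU (s n)) with hpdef
  set f : ℕ → X := fun n => PF (yq n) with hfdef
  have hss : ∀ n, s (n + 1) = T (s n) := fun n => Function.iterate_succ_apply' T n x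
  -- conjunct 4 : the prox identity
  have hconj4 : ∀ n : ℕ, T^[n+1] x - T^[n] x + PU (T^[n] x) = prox (RU (T^[n] x)) := by
    intro n
    have h1 : T^[n+1] x = T (T^[n] x) := Function.iterate_succ_apply' T n x
    rw [h1, hT (T^[n] x)]
    abel
  have hpeq : ∀ n, p n = s (n + 1) - s n + u n := by
    intro n
    have := hconj4 n
    simp only [hpdef, hudef, hsdef]
    rw [← this]
  -- basic projection facts
  have hPUv : PU v = 0 := DRaux.PU_of_perp hPU hvU
  have huy : ∀ n, u n = PU (yq n) := by
    intro n
    simp only [hudef, hyqdef]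
    rw [DRaux.PU_add hPU, DRaux.PU_smul hPU, hPUv, smul_zero, zero_add]
  have humem : ∀ n, u n ∈ U := fun n => DRaux.PU_mem hPU (s n)
  have hyperp : ∀ n, yq n - u n ∈ Uᗮ := by
    intro n; rw [huy n]; exact DRaux.PU_perp hPU (yq n)
  -- δ identities
  have hδeq : ∀ n, δ n = v + (s (n + 1) - s n) := by
    intro n
    simp only [hδdef, hyqdef]
    push_cast
    module
  have hδv : ∀ n, ⟪δ n, v⟫ ≤ 0 := by
    intro n
    have h1 := hv.2 (s n - T (s n)) (subset_closure ⟨s n, rfl⟩)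
    rw [zero_sub, inner_neg_right, inner_sub_left] at h1
    have h2 : ‖v‖ ^ 2 ≤ ⟪s n - T (s n), v⟫ := by
      rw [← real_inner_self_eq_norm_sq]
      have := real_inner_comm (s n - T (s n)) v
      linarith [h1]
    have h3 : ⟪δ n, v⟫ = ‖v‖ ^ 2 - ⟪s n - T (s n), v⟫ := by
      rw [hδeq n, hss n, inner_add_left, inner_sub_left, real_inner_self_eq_norm_sq]
      have e1 : ⟪s n - T (s n), v⟫ = ⟪s n, v⟫ - ⟪T (s n), v⟫ := inner_sub_left _ _ _
      linarith [e1]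
    linarith
  -- F is closed and y ∈ F
  have hTcont : Continuous T := DRaux.T_cont hgproper hgconv hprox hPU hRU hT
  have hFclosed : IsClosed F := by
    rw [hF]
    have : {z : X | z = T (z + v)} = (fun z => z - T (z + v)) ⁻¹' {0} := by
      ext z; simp [sub_eq_zero]
    rw [this]
    exact IsClosed.preimage (continuous_id.sub (hTcont.comp (continuous_id.add continuous_const)))
      isClosed_singleton
  have hyF : y = T (y + v) := by
    have h1 : y ∈ F := hFclosed.mem_of_tendsto hy (Filter.Eventually.of_forall fun n => (hPF _).1)
    rw [hF] at h1; exact h1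
  -- Fejér monotonicity
  have hfej : ∀ fz : X, fz = T (fz + v) → ∀ n,
      ‖yq (n + 1) - fz‖ ^ 2 + ‖δ n‖ ^ 2 ≤ ‖yq n - fz‖ ^ 2 := by
    intro fz hfz n
    have hfirm := DRaux.T_firm hgproper hgconv hprox hPU hRU hT (s n) (fz + v)
    rw [← hfz, ← hss n] at hfirm
    -- hfirm : ‖s (n+1) - fz‖² + ‖(s n - s (n+1)) - (fz + v - fz)‖² ≤ ‖s n - (fz + v)‖²
    have hA : yq (n + 1) - fz = (s (n + 1) - fz) + ((n : ℝ) + 1) • v := by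
      simp only [hyqdef]; push_cast; module
    have hB : yq n - fz = (s n - fz) + (n : ℝ) • v := by
      simp only [hyqdef]; module
    have hBv : s n - (fz + v) = (s n - fz) - v := by abel
    have hneg : (s n - s (n + 1)) - (fz + v - fz) = -δ n := by
      rw [hδeq n]; abel
    rw [hneg, hBv] at hfirm
    rw [norm_neg] at hfirm
    have eA : ‖(s (n + 1) - fz) + ((n : ℝ) + 1) • v‖ ^ 2
        = ‖s (n + 1) - fz‖ ^ 2 + 2 * (((n : ℝ) + 1) * ⟪s (n + 1) - fz, v⟫)
          + ((n : ℝ) + 1) ^ 2 * ‖v‖ ^ 2 := by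
      rw [norm_add_sq_real, real_inner_smul_right, norm_smul, Real.norm_eq_abs, mul_pow, sq_abs]
    have eB : ‖(s n - fz) + (n : ℝ) • v‖ ^ 2
        = ‖s n - fz‖ ^ 2 + 2 * ((n : ℝ) * ⟪s n - fz, v⟫) + (n : ℝ) ^ 2 * ‖v‖ ^ 2 := by
      rw [norm_add_sq_real, real_inner_smul_right, norm_smul, Real.norm_eq_abs, mul_pow, sq_abs]
    have eBv : ‖(s n - fz) - v‖ ^ 2 = ‖s n - fz‖ ^ 2 - 2 * ⟪s n - fz, v⟫ + ‖v‖ ^ 2 := by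
      rw [norm_sub_sq_real]
    have hd : ⟪δ n, v⟫ = ‖v‖ ^ 2 + ⟪s (n + 1) - fz, v⟫ - ⟪s n - fz, v⟫ := by
      have e1 : δ n = v + ((s (n + 1) - fz) - (s n - fz)) := by rw [hδeq n]; abel
      rw [e1, inner_add_left, inner_sub_left, real_inner_self_eq_norm_sq]
      ring
    have hprod : ((n : ℝ) + 1) * ⟪δ n, v⟫ ≤ 0 :=
      mul_nonpos_of_nonneg_of_nonpos (by positivity) (hδv n)
    rw [hA, hB, eA, eB]
    nlinarith [hfirm, eBv, hd, hprod]
  -- boundedness and δ → 0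
  have hdq : ∀ n, ‖yq (n + 1) - y‖ ^ 2 + ‖δ n‖ ^ 2 ≤ ‖yq n - y‖ ^ 2 := hfej y hyF
  have hDmono : ∀ n, ‖yq (n + 1) - y‖ ^ 2 ≤ ‖yq n - y‖ ^ 2 := fun n => by
    have := hdq n; nlinarith [sq_nonneg ‖δ n‖]
  have hDbound : ∀ n, ‖yq n - y‖ ^ 2 ≤ ‖yq 0 - y‖ ^ 2 := by
    intro n
    induction n with
    | zero => exact le_refl _
    | succ k ih => exact le_trans (hDmono k) ih
  have hsum : ∀ n, (Finset.range n).sum (fun k => ‖δ k‖ ^ 2) ≤ ‖yq 0 - y‖ ^ 2 := by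
    intro n
    have key : ∀ n, (Finset.range n).sum (fun k => ‖δ k‖ ^ 2) + ‖yq n - y‖ ^ 2
        ≤ ‖yq 0 - y‖ ^ 2 := by
      intro n
      induction n with
      | zero => simp
      | succ k ih =>
        rw [Finset.sum_range_succ]
        have := hdq k
        linarith
    have := key n
    nlinarith [sq_nonneg ‖yq n - y‖]
  have hδ0 : Tendsto δ atTop (𝓝 0) := by
    have hsummable : Summable fun k => ‖δ k‖ ^ 2 :=
      summable_of_sum_range_le (fun k => sq_nonneg _) hsum
    have h2 : Tendsto (fun k => ‖δ k‖ ^ 2) atTop (𝓝 0) := hsummable.tendsto_atTop_zero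
    have h3 : Tendsto (fun k => ‖δ k‖) atTop (𝓝 0) := by
      have h4 : Tendsto (fun k => Real.sqrt (‖δ k‖ ^ 2)) atTop (𝓝 (Real.sqrt 0)) :=
        (Real.continuous_sqrt.tendsto 0).comp h2
      rw [Real.sqrt_zero] at h4
      have h5 : (fun k => Real.sqrt (‖δ k‖ ^ 2)) = fun k => ‖δ k‖ := by
        funext k; rw [Real.sqrt_sq (norm_nonneg _)]
      rwa [h5] at h4
    exact tendsto_zero_iff_norm_tendsto_zero.mpr h3
  -- uniform bounds
  have hδn0 : Tendsto (fun k => ‖δ k‖) atTop (𝓝 0) := by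
    have hsummable : Summable fun k => ‖δ k‖ ^ 2 :=
      summable_of_sum_range_le (fun k => sq_nonneg _) hsum
    have h2 : Tendsto (fun k => ‖δ k‖ ^ 2) atTop (𝓝 0) := hsummable.tendsto_atTop_zero
    have h4 : Tendsto (fun k => Real.sqrt (‖δ k‖ ^ 2)) atTop (𝓝 (Real.sqrt 0)) :=
      (Real.continuous_sqrt.tendsto 0).comp h2
    rw [Real.sqrt_zero] at h4
    have h5 : (fun k => Real.sqrt (‖δ k‖ ^ 2)) = fun k => ‖δ k‖ := by
      funext k; rw [Real.sqrt_sq (norm_nonneg _)]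
    rwa [h5] at h4
  have hδ0 : Tendsto δ atTop (𝓝 0) := tendsto_zero_iff_norm_tendsto_zero.mpr hδn0
  -- uniform bounds
  have hyqb : ∀ n, ‖yq n‖ ≤ ‖yq 0 - y‖ + ‖y‖ := by
    intro n
    have h1 : ‖yq n - y‖ ≤ ‖yq 0 - y‖ := by
      have := hDbound n
      nlinarith [norm_nonneg (yq n - y), norm_nonneg (yq 0 - y)]
    calc ‖yq n‖ = ‖(yq n - y) + y‖ := by rw [sub_add_cancel]
      _ ≤ ‖yq n - y‖ + ‖y‖ := norm_add_le _ _
      _ ≤ ‖yq 0 - y‖ + ‖y‖ := by linarith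
  obtain ⟨C, hCy, hCu, hC0⟩ : ∃ C : ℝ, (∀ n, ‖yq n‖ ≤ C) ∧ (∀ n, ‖u n‖ ≤ C) ∧ 0 ≤ C :=
    ⟨‖yq 0 - y‖ + ‖y‖, hyqb,
      fun n => le_trans (by rw [huy n]; exact DRaux.PU_norm_le hPU (yq n)) (hyqb n),
      by positivity⟩
  -- identities for later use
  have hsdiff : ∀ n, s (n + 1) - s n = δ n - v := by
    intro n; rw [hδeq n]; abel
  have hpdelta : ∀ n, p n = u n + (δ n - v) := by
    intro n; rw [hpeq n, hsdiff n]; abel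
  -- the distinguished point of Z
  obtain ⟨zb, hzbZ⟩ := hZne
  have hzb' : zb ∈ {z | ∃ a b : X, a ∈ normalCone U z ∧ b ∈ ESubdiff g (z - v) ∧ v = a + b} := by
    rw [← hZ]; exact hzbZ
  obtain ⟨ab, bb, hab, hbb, hvab⟩ := hzb'
  have hzbU : zb ∈ U := hab.1
  have habperp : ab ∈ Uᗮ := hab.2
  have hbbperp : bb ∈ Uᗮ := by
    have h1 : bb = v - ab := by rw [hvab]; abel
    rw [h1]; exact Submodule.sub_mem _ hvU habperp
  have hsub_ne_top : ∀ (q0 b0 : X), (∀ ζ, g q0 + ((⟪ζ - q0, b0⟫ : ℝ) : EReal) ≤ g ζ) →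
      g q0 ≠ ⊤ := by
    intro q0 b0 hsub htop
    obtain ⟨x0, hx0⟩ := hgproper.2
    have h := hsub x0
    rw [htop, EReal.top_add_coe] at h
    exact hx0 (top_le_iff.mp h)
  have hbbsub : ∀ ζ, g (zb - v) + ((⟪ζ - (zb - v), bb⟫ : ℝ) : EReal) ≤ g ζ := hbb
  have hμtop : g (zb - v) ≠ ⊤ := hsub_ne_top _ _ hbbsub
  set μ : ℝ := (g (zb - v)).toReal with hμdef
  have hμ : g (zb - v) = (μ : EReal) := DRaux.efin hgproper hμtop
  have hUperp_inner : ∀ (w1 w2 : X), w1 ∈ U → w2 ∈ Uᗮ → ⟪w1, w2⟫ = 0 := fun w1 w2 h1 h2 =>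
    Submodule.inner_right_of_mem_orthogonal h1 h2
  -- minimality of μ over U
  have hmin : ∀ u' ∈ U, (μ : EReal) ≤ g (u' - v) := by
    intro u' hu'
    have h := hbbsub (u' - v)
    rw [show (u' - v) - (zb - v) = u' - zb from by abel,
      hUperp_inner (u' - zb) bb (Submodule.sub_mem _ hu' hzbU) hbbperp, hμ] at h
    simpa using h
  have hiInf : (⨅ u' : U, g ((u' : X) - v)) = (μ : EReal) := by
    apply le_antisymm
    · exact iInf_le_of_le ⟨zb, hzbU⟩ (le_of_eq hμ)
    · exact le_iInf fun u' => hmin u' u'.2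
  -- real sandwich bounds for g (p n)
  have hptop : ∀ n, g (p n) ≠ ⊤ := fun n => DRaux.prox_ne_top hgproper hprox (RU (s n))
  have huperp2 : ∀ n, u n - yq n ∈ Uᗮ := by
    intro n
    rw [show u n - yq n = -(yq n - u n) from by abel]
    exact Submodule.neg_mem _ (hyperp n)
  have hplow : ∀ n, μ + ⟪δ n, bb⟫ ≤ (g (p n)).toReal := by
    intro n
    have h := hbbsub (p n)
    rw [hμ, DRaux.efin hgproper (hptop n), ← EReal.coe_add, EReal.coe_le_coe_iff] at h
    rw [show p n - (zb - v) = (u n - zb) + δ n from by rw [hpdelta n]; abel,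
      inner_add_left, hUperp_inner (u n - zb) bb (Submodule.sub_mem _ (humem n) hzbU) hbbperp]
      at h
    linarith
  have hbn : ∀ n, RU (s n) - p n = (u n - yq n) + ((n : ℝ) + 1) • v - δ n := by
    intro n
    rw [hRU (s n), hpeq n]
    have hsn1 : s (n + 1) = s n + (δ n - v) := by rw [← hsdiff n]; abel
    have hsn : s n = yq n - (n : ℝ) • v := by simp only [hyqdef]; abel
    simp only [hudef]
    rw [hsn1, hsn]
    module
  have hphigh : ∀ n, (g (p n)).toReal ≤ μ + (⟪δ n, u n - yq n⟫ - ⟪u n - zb, δ n⟫) := by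
    intro n
    have h : (g (p n)).toReal + ⟪(zb - v) - p n, RU (s n) - p n⟫ ≤ μ :=
      DRaux.prox_subgrad_real hgproper hgconv hprox hμtop
    have hflip : ⟪(zb - v) - p n, RU (s n) - p n⟫ = -⟪p n - (zb - v), RU (s n) - p n⟫ := by
      rw [show (zb - v) - p n = -(p n - (zb - v)) from by abel, inner_neg_left]
    have hinner : ⟪p n - (zb - v), RU (s n) - p n⟫
        = -⟪u n - zb, δ n⟫ + (⟪δ n, u n - yq n⟫ + ((n : ℝ) + 1) * ⟪δ n, v⟫ - ‖δ n‖ ^ 2) := by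
      rw [hbn n, show p n - (zb - v) = (u n - zb) + δ n from by rw [hpdelta n]; abel]
      have z1 : ⟪u n - zb, u n - yq n⟫ = 0 :=
        hUperp_inner (u n - zb) (u n - yq n) (Submodule.sub_mem _ (humem n) hzbU) (huperp2 n)
      have z2 : ((n : ℝ) + 1) * ⟪u n - zb, v⟫ = 0 := by
        rw [hUperp_inner (u n - zb) v (Submodule.sub_mem _ (humem n) hzbU) hvU]; ring
      have z3 : ⟪δ n, δ n⟫ = ‖δ n‖ ^ 2 := real_inner_self_eq_norm_sq _
      simp only [inner_add_left, inner_add_right, inner_sub_right, real_inner_smul_right]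
        at z1 ⊢
      linarith [z1, z2, z3]
    have hprod : ((n : ℝ) + 1) * ⟪δ n, v⟫ ≤ 0 :=
      mul_nonpos_of_nonneg_of_nonpos (by positivity) (hδv n)
    rw [hflip, hinner] at h
    nlinarith [sq_nonneg ‖δ n‖, h, hprod]
  -- limits of the sandwich
  have hlowlim : Tendsto (fun n => μ + ⟪δ n, bb⟫) atTop (𝓝 μ) := by
    have h1 : Tendsto (fun n => ⟪δ n, bb⟫) atTop (𝓝 (0 : ℝ)) := by
      have h2 := Filter.Tendsto.inner (𝕜 := ℝ) hδ0 (tendsto_const_nhds (x := bb))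
      simpa using h2
    simpa using (tendsto_const_nhds (x := μ)).add h1
  have hhighlim : Tendsto (fun n => μ + (⟪δ n, u n - yq n⟫ - ⟪u n - zb, δ n⟫)) atTop (𝓝 μ) := by
    have h1 : Tendsto (fun n => ⟪δ n, u n - yq n⟫) atTop (𝓝 (0 : ℝ)) := by
      rw [tendsto_zero_iff_abs_tendsto_zero]
      apply squeeze_zero (g := fun n => 2 * C * ‖δ n‖) (fun n => abs_nonneg _)
      · intro n
        calc |⟪δ n, u n - yq n⟫| ≤ ‖δ n‖ * ‖u n - yq n‖ := abs_real_inner_le_norm _ _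
          _ ≤ ‖δ n‖ * (2 * C) := by
              have h3 : ‖u n - yq n‖ ≤ 2 * C :=
                le_trans (norm_sub_le _ _) (by linarith [hCy n, hCu n])
              exact mul_le_mul_of_nonneg_left h3 (norm_nonneg _)
          _ = 2 * C * ‖δ n‖ := by ring
      · simpa using (tendsto_const_nhds (x := 2 * C)).mul hδn0
    have h2 : Tendsto (fun n => ⟪u n - zb, δ n⟫) atTop (𝓝 (0 : ℝ)) := by
      rw [tendsto_zero_iff_abs_tendsto_zero]
      apply squeeze_zero (g := fun n => (C + ‖zb‖) * ‖δ n‖) (fun n => abs_nonneg _)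
      · intro n
        calc |⟪u n - zb, δ n⟫| ≤ ‖u n - zb‖ * ‖δ n‖ := abs_real_inner_le_norm _ _
          _ ≤ (C + ‖zb‖) * ‖δ n‖ := by
              have h3 : ‖u n - zb‖ ≤ C + ‖zb‖ :=
                le_trans (norm_sub_le _ _) (by linarith [hCu n])
              exact mul_le_mul_of_nonneg_right h3 (norm_nonneg _)
      · simpa using (tendsto_const_nhds (x := C + ‖zb‖)).mul hδn0
    simpa using (tendsto_const_nhds (x := μ)).add (h1.sub h2)
  have hgp_real : Tendsto (fun n => (g (p n)).toReal) atTop (𝓝 μ) :=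
    tendsto_of_tendsto_of_tendsto_of_le_of_le hlowlim hhighlim hplow hphigh
  have hgoal6 : Tendsto (fun n : ℕ => g (prox (RU (T^[n] x)))) atTop
      (𝓝 (⨅ u' : U, g ((u' : X) - v))) := by
    rw [hiInf]
    have he : (fun n : ℕ => g (prox (RU (T^[n] x)))) = fun n => (((g (p n)).toReal : ℝ) : EReal) :=
      funext fun n => DRaux.efin hgproper (hptop n)
    rw [he]
    exact EReal.tendsto_coe.mpr hgp_real
  -- fixed points of T(· + v) and their subgradients
  have hPU_of_mem : ∀ {a : X}, a ∈ U → PU a = a := by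
    intro a ha
    rw [hPU]
    exact Submodule.starProjection_eq_self_iff.mpr ha
  have hFiff : ∀ w : X, w = T (w + v) ↔ prox (RU w - v) = PU w - v := by
    intro w
    have hPUwv : PU (w + v) = PU w := by rw [DRaux.PU_add hPU, hPUv, add_zero]
    have hRUwv : RU (w + v) = RU w - v := by
      rw [hRU (w + v), hRU w, hPUwv]; module
    have he : T (w + v) = w + v - PU w + prox (RU w - v) := by
      rw [hT (w + v), hPUwv, hRUwv]
    constructor
    · intro h
      have h2 : w = w + v - PU w + prox (RU w - v) := by rw [← he]; exact h
      have h3 := congrArg (fun t => t - (w + v - PU w)) h2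
      rw [show w + v - PU w + prox (RU w - v) - (w + v - PU w) = prox (RU w - v) from by abel]
        at h3
      rw [← h3]; abel
    · intro h
      rw [he, h]; abel
  have hsubF : ∀ w : X, w = T (w + v) →
      ∀ ζ : X, g (PU w - v) + ((⟪ζ - (PU w - v), PU w - w⟫ : ℝ) : EReal) ≤ g ζ := by
    intro w hw ζ
    have h1 := (hFiff w).mp hw
    have h2 := DRaux.prox_subgrad hgproper hgconv hprox (RU w - v) ζ
    rw [h1, show (RU w - v) - (PU w - v) = PU w - w from by rw [hRU w]; module] at h2
    exact h2
  -- conjuncts 2 and 3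
  have hgoal2 : PU y ∈ U := DRaux.PU_mem hPU y
  have hPUyperp : PU y - y ∈ Uᗮ := by
    rw [show PU y - y = -(y - PU y) from by abel]
    exact Submodule.neg_mem _ (DRaux.PU_perp hPU y)
  have hgoal3 : ∀ u' ∈ U, g (PU y - v) ≤ g (u' - v) := by
    intro u' hu'
    have h := hsubF y hyF (u' - v)
    rw [show (u' - v) - (PU y - v) = u' - PU y from by abel,
      hUperp_inner (u' - PU y) (PU y - y) (Submodule.sub_mem _ hu' hgoal2) hPUyperp] at h
    simpa using h
  have hgPUy : g (PU y - v) = (μ : EReal) :=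
    le_antisymm (by rw [← hμ]; exact hgoal3 zb hzbU) (hmin (PU y) hgoal2)
  -- transfer of distinguished subgradients between minimizers
  have htransfer : ∀ (z1 : X), z1 ∈ U → ∀ b1 ∈ Uᗮ,
      (∀ ζ, g (z1 - v) + ((⟪ζ - (z1 - v), b1⟫ : ℝ) : EReal) ≤ g ζ) →
      ∀ (z2 : X), z2 ∈ U → g (z2 - v) ≤ g (z1 - v) →
      (∀ ζ, g (z2 - v) + ((⟪ζ - (z2 - v), b1⟫ : ℝ) : EReal) ≤ g ζ) := by
    intro z1 hz1 b1 hb1 hsub z2 hz2 hle ζ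
    have h1 := hsub ζ
    rw [show ζ - (z1 - v) = (ζ - (z2 - v)) + (z2 - z1) from by abel, inner_add_left,
      hUperp_inner (z2 - z1) b1 (Submodule.sub_mem _ hz2 hz1) hb1, add_zero] at h1
    calc g (z2 - v) + ((⟪ζ - (z2 - v), b1⟫ : ℝ) : EReal)
        ≤ g (z1 - v) + ((⟪ζ - (z2 - v), b1⟫ : ℝ) : EReal) := add_le_add_left hle _
      _ ≤ g ζ := h1
  -- every element of Z is a minimizer with value μ
  have hZfacts : ∀ z ∈ Z, z ∈ U ∧ g (z - v) = (μ : EReal) := by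
    intro z hzZ
    have hz' : z ∈ {z | ∃ a b : X, a ∈ normalCone U z ∧ b ∈ ESubdiff g (z - v) ∧ v = a + b} := by
      rw [← hZ]; exact hzZ
    obtain ⟨az, bz, hazN, hbz, hvz⟩ := hz'
    have hzU : z ∈ U := hazN.1
    have hbzperp : bz ∈ Uᗮ := by
      rw [show bz = v - az from by rw [hvz]; abel]
      exact Submodule.sub_mem _ hvU hazN.2
    have hminz : g (z - v) ≤ g (zb - v) := by
      have h := hbz (zb - v)
      rw [show (zb - v) - (z - v) = zb - z from by abel,
        hUperp_inner (zb - z) bz (Submodule.sub_mem _ hzbU hzU) hbzperp] at h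
      simpa using h
    exact ⟨hzU, le_antisymm (hμ ▸ hminz) (hmin z hzU)⟩
  -- PZ (u n) = PU (f n)
  have hfF : ∀ n, f n = T (f n + v) := by
    intro n
    have h1 : f n ∈ F := (hPF (yq n)).1
    rw [hF] at h1; exact h1
  have hPZeq : ∀ n, PZ (u n) = PU (f n) := by
    intro n
    have hPUfn_subgrad := hsubF (f n) (hfF n)
    have hPUfnU : PU (f n) ∈ U := DRaux.PU_mem hPU (f n)
    have hfnperp : PU (f n) - f n ∈ Uᗮ := by
      rw [show PU (f n) - f n = -(f n - PU (f n)) from by abel]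
      exact Submodule.neg_mem _ (DRaux.PU_perp hPU (f n))
    have hPUfnZ : PU (f n) ∈ Z := by
      rw [hZ]
      exact ⟨v - (PU (f n) - f n), PU (f n) - f n, ⟨hPUfnU, Submodule.sub_mem _ hvU hfnperp⟩,
        hPUfn_subgrad, by abel⟩
    refine metricProj_unique (hPZ (u n)) ⟨hPUfnZ, ?_⟩
    intro z hzZ
    obtain ⟨hzU, hzval⟩ := hZfacts z hzZ
    have hliftsub : ∀ ζ, g (z - v) + ((⟪ζ - (z - v), PU (f n) - f n⟫ : ℝ) : EReal) ≤ g ζ :=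
      htransfer (PU (f n)) hPUfnU (PU (f n) - f n) hfnperp hPUfn_subgrad z hzU
        (by rw [hzval]; exact hmin (PU (f n)) hPUfnU)
    have hproxlift : prox ((z - v) + (PU (f n) - f n)) = z - v :=
      DRaux.prox_eq_of_subgrad hgproper hgconv hprox hliftsub
    have hliftF : z + (f n - PU (f n)) = T (z + (f n - PU (f n)) + v) := by
      apply (hFiff _).mpr
      have hPUlift : PU (z + (f n - PU (f n))) = z := by
        rw [DRaux.PU_add hPU, hPU_of_mem hzU, DRaux.PU_of_perp hPU (DRaux.PU_perp hPU (f n)),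
          add_zero]
      rw [hPUlift, hRU (z + (f n - PU (f n))), hPUlift,
        show 2 • z - (z + (f n - PU (f n))) - v = (z - v) + (PU (f n) - f n) from by module]
      exact hproxlift
    have hliftFmem : z + (f n - PU (f n)) ∈ F := by rw [hF]; exact hliftF
    have hchar := (hPF (yq n)).2 _ hliftFmem
    rw [show (z + (f n - PU (f n))) - PF (yq n) = z - PU (f n) from by
      rw [show PF (yq n) = f n from rfl]; abel] at hchar
    have hsplit : ⟪z - PU (f n), yq n - PF (yq n)⟫
        = ⟪z - PU (f n), u n - PU (f n)⟫
          + ⟪z - PU (f n), (yq n - u n) - (f n - PU (f n))⟫ := by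
      rw [← inner_add_right]
      congr 1
      rw [show PF (yq n) = f n from rfl]
      abel
    rw [hsplit, hUperp_inner (z - PU (f n)) _ (Submodule.sub_mem _ hzU hPUfnU)
      (Submodule.sub_mem _ (hyperp n) (DRaux.PU_perp hPU (f n))), add_zero] at hchar
    exact hchar
  -- strong convergence PZ (u n) → PU y
  have hftend : Tendsto f atTop (𝓝 y) := hy
  have hPZu : Tendsto (fun n => PZ (u n)) atTop (𝓝 (PU y)) := by
    have h2 : Tendsto (fun n => PU (f n)) atTop (𝓝 (PU y)) := by
      rw [tendsto_iff_norm_sub_tendsto_zero]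
      have h3 : ∀ n, ‖PU (f n) - PU y‖ ≤ ‖f n - y‖ := fun n => by
        rw [← DRaux.PU_sub hPU]; exact DRaux.PU_norm_le hPU _
      apply squeeze_zero (fun n => norm_nonneg _) h3
      rw [← tendsto_iff_norm_sub_tendsto_zero]
      exact hftend
    have h4 : (fun n => PZ (u n)) = fun n => PU (f n) := funext hPZeq
    rw [h4]; exact h2
  -- weak convergence of the shadow sequence
  have hgoal1 : ∀ w : X, Tendsto (fun n : ℕ => ⟪u n, w⟫) atTop (𝓝 ⟪PU y, w⟫) := by
    intro w
    by_contra hcon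
    rw [Metric.tendsto_atTop] at hcon
    push_neg at hcon
    obtain ⟨ε, hε, hcon⟩ := hcon
    have hfreq : ∃ᶠ n in atTop, ε ≤ dist (⟪u n, w⟫ : ℝ) ⟪PU y, w⟫ := by
      rw [Filter.frequently_atTop]
      intro N; obtain ⟨n, hn1, hn2⟩ := hcon N; exact ⟨n, hn1, hn2⟩
    obtain ⟨ns, hns_mono, hns⟩ := Filter.extraction_of_frequently_atTop hfreq
    obtain ⟨ψ, c, hψ, hweak⟩ := DRaux.weak_compact_subseq (fun k => u (ns k)) C hC0
      (fun k => hCu (ns k))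
    set m : ℕ → ℕ := fun k => ns (ψ k) with hmdef
    have hm_tend : Tendsto m atTop atTop := (hns_mono.comp hψ).tendsto_atTop
    have hweak' : ∀ d : X, Tendsto (fun k => ⟪u (m k), d⟫) atTop (𝓝 ⟪c, d⟫) := hweak
    -- c ∈ U
    have hcU : c ∈ U := by
      have h1 : c ∈ Uᗮᗮ := by
        rw [Submodule.mem_orthogonal]
        intro e he
        have h3 : ⟪c, e⟫ = 0 := by
          refine tendsto_nhds_unique (hweak' e) ?_
          rw [show (fun k => (⟪u (m k), e⟫ : ℝ)) = fun _ => (0 : ℝ) from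
            funext fun k => hUperp_inner _ _ (humem (m k)) he]
          exact tendsto_const_nhds
        rw [real_inner_comm] at h3
        exact h3
      rwa [Submodule.orthogonal_orthogonal] at h1
    -- p (m k) converges weakly to c - v
    have hδm : Tendsto (fun k => δ (m k)) atTop (𝓝 0) := hδ0.comp hm_tend
    have hpweak : ∀ d : X, Tendsto (fun k => ⟪p (m k), d⟫) atTop (𝓝 ⟪c - v, d⟫) := by
      intro d
      have h1 : (fun k => (⟪p (m k), d⟫ : ℝ)) = fun k => ⟪u (m k), d⟫ + ⟪δ (m k) - v, d⟫ := by
        funext k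
        rw [hpdelta (m k), inner_add_left]
      rw [h1]
      have h2 : Tendsto (fun k => (⟪δ (m k) - v, d⟫ : ℝ)) atTop (𝓝 ⟪(0 : X) - v, d⟫) :=
        Filter.Tendsto.inner (𝕜 := ℝ) (hδm.sub tendsto_const_nhds) tendsto_const_nhds
      have h3 := (hweak' d).add h2
      rw [show (⟪c, d⟫ : ℝ) + ⟪(0 : X) - v, d⟫ = ⟪c - v, d⟫ from by
        rw [← inner_add_left]; congr 1; abel] at h3
      exact h3
    -- g (c - v) ≤ μ
    have hgc_le : g (c - v) ≤ (μ : EReal) := by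
      by_contra hgt
      push_neg at hgt
      obtain ⟨ε', hε'pos, hε'⟩ : ∃ ε' : ℝ, 0 < ε' ∧ ((μ + ε' : ℝ) : EReal) < g (c - v) := by
        by_cases htop : g (c - v) = ⊤
        · exact ⟨1, one_pos, by rw [htop]; exact EReal.coe_lt_top _⟩
        · obtain ⟨r, hre⟩ : ∃ r : ℝ, g (c - v) = (r : EReal) := ⟨_, DRaux.efin hgproper htop⟩
          rw [hre] at hgt
          have hr : μ < r := EReal.coe_lt_coe_iff.mp hgt
          refine ⟨(r - μ) / 2, by linarith, ?_⟩
          rw [hre]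
          exact EReal.coe_lt_coe_iff.mpr (by linarith)
      set Sl : Set X := {ζ | g ζ ≤ ((μ + ε' : ℝ) : EReal)} with hSldef
      have hSlclosed : IsClosed Sl := by
        rw [← isOpen_compl_iff, isOpen_iff_mem_nhds]
        intro ζ0 hζ0
        have h1 : ((μ + ε' : ℝ) : EReal) < g ζ0 := not_le.mp hζ0
        have h2 := hglsc ζ0 _ h1
        refine Filter.mem_of_superset h2 fun ζ hζ => ?_
        show ζ ∉ Sl
        simp only [hSldef, Set.mem_setOf_eq]
        exact not_le.mpr hζ
      have hSlconv : Convex ℝ Sl := by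
        rw [convex_iff_forall_pos]
        intro ζ1 h1 ζ2 h2 a b ha hb hab
        have hg1 : g ζ1 ≤ ((μ + ε' : ℝ) : EReal) := h1
        have hg2 : g ζ2 ≤ ((μ + ε' : ℝ) : EReal) := h2
        have hg1t : g ζ1 ≠ ⊤ := fun h => by
          rw [h] at hg1; exact (EReal.coe_ne_top _) (top_le_iff.mp hg1)
        have hg2t : g ζ2 ≠ ⊤ := fun h => by
          rw [h] at hg2; exact (EReal.coe_ne_top _) (top_le_iff.mp hg2)
        obtain ⟨r1, hr1e⟩ : ∃ r : ℝ, g ζ1 = (r : EReal) := ⟨_, DRaux.efin hgproper hg1t⟩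
        obtain ⟨r2, hr2e⟩ : ∃ r : ℝ, g ζ2 = (r : EReal) := ⟨_, DRaux.efin hgproper hg2t⟩
        rw [hr1e] at hg1
        rw [hr2e] at hg2
        have hr1 : r1 ≤ μ + ε' := EReal.coe_le_coe_iff.mp hg1
        have hr2 : r2 ≤ μ + ε' := EReal.coe_le_coe_iff.mp hg2
        have hc' := hgconv ζ1 ζ2 a b ha.le hb.le hab
        show g (a • ζ1 + b • ζ2) ≤ ((μ + ε' : ℝ) : EReal)
        calc g (a • ζ1 + b • ζ2) ≤ (a : EReal) * g ζ1 + (b : EReal) * g ζ2 := hc'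
          _ = ((a * r1 + b * r2 : ℝ) : EReal) := by
              rw [hr1e, hr2e, ← EReal.coe_mul, ← EReal.coe_mul, ← EReal.coe_add]
          _ ≤ ((μ + ε' : ℝ) : EReal) := by
              rw [EReal.coe_le_coe_iff]
              have e1 : a * r1 ≤ a * (μ + ε') := mul_le_mul_of_nonneg_left hr1 ha.le
              have e2 : b * r2 ≤ b * (μ + ε') := mul_le_mul_of_nonneg_left hr2 hb.le
              have e3 : a * (μ + ε') + b * (μ + ε') = μ + ε' := by
                rw [← add_mul, hab, one_mul]
              linarith
      have hSlne : (zb - v) ∈ Sl := by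
        show g (zb - v) ≤ ((μ + ε' : ℝ) : EReal)
        rw [hμ]
        exact EReal.coe_le_coe_iff.mpr (by linarith)
      have hSlcomplete : IsComplete Sl := hSlclosed.isComplete
      have hup_tendsto : Tendsto (fun k => (g (p (m k))).toReal) atTop (𝓝 μ) :=
        hgp_real.comp hm_tend
      have hev : ∀ᶠ k in atTop, p (m k) ∈ Sl := by
        have h1 : ∀ᶠ k in atTop, (g (p (m k))).toReal < μ + ε' :=
          hup_tendsto.eventually (eventually_lt_nhds (by linarith : μ < μ + ε'))
        filter_upwards [h1] with k hk
        show g (p (m k)) ≤ ((μ + ε' : ℝ) : EReal)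
        rw [DRaux.efin hgproper (hptop (m k))]
        exact EReal.coe_le_coe_iff.mpr hk.le
      obtain ⟨r0, hr0S, hr0⟩ := exists_norm_eq_iInf_of_complete_convex
        ⟨zb - v, hSlne⟩ hSlcomplete hSlconv (c - v)
      have hr0char := (norm_eq_iInf_iff_real_inner_le_zero hSlconv hr0S).mp hr0
      obtain ⟨K, hK⟩ := Filter.eventually_atTop.mp hev
      have hlim : Tendsto (fun k => (⟪c - v - r0, p (m (k + K)) - r0⟫ : ℝ)) atTop
          (𝓝 ⟪c - v - r0, (c - v) - r0⟫) := by
        have h1 : Tendsto (fun k => (⟪p (m (k + K)), c - v - r0⟫ : ℝ)) atTop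
            (𝓝 ⟪c - v, c - v - r0⟫) := (hpweak _).comp (tendsto_add_atTop_nat K)
        have h2 : (fun k => (⟪c - v - r0, p (m (k + K)) - r0⟫ : ℝ))
            = fun k => ⟪p (m (k + K)), c - v - r0⟫ - ⟪c - v - r0, r0⟫ := by
          funext k
          rw [inner_sub_right, real_inner_comm (c - v - r0) (p (m (k + K)))]
        rw [h2, show (⟪c - v - r0, (c - v) - r0⟫ : ℝ)
            = ⟪c - v, c - v - r0⟫ - ⟪c - v - r0, r0⟫ from by
          rw [inner_sub_left, real_inner_comm r0 (c - v - r0)]]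
        exact h1.sub tendsto_const_nhds
      have hle0 : (⟪c - v - r0, (c - v) - r0⟫ : ℝ) ≤ 0 :=
        le_of_tendsto hlim (Filter.Eventually.of_forall fun k =>
          hr0char _ (hK (k + K) (Nat.le_add_left K k)))
      have heq : c - v = r0 := by
        have h5 : ‖(c - v) - r0‖ ^ 2 ≤ 0 := by
          rw [← real_inner_self_eq_norm_sq]; exact hle0
        have h6 : ‖(c - v) - r0‖ = 0 := by nlinarith [norm_nonneg ((c - v) - r0)]
        rw [norm_eq_zero, sub_eq_zero] at h6; exact h6
      have hfin : g (c - v) ≤ ((μ + ε' : ℝ) : EReal) := by rw [heq]; exact hr0S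
      exact absurd hfin (not_le.mpr hε')
    -- c ∈ Z, so PZ c = c
    have hcZ : c ∈ Z := by
      rw [hZ]
      refine ⟨ab, bb, ⟨hcU, habperp⟩, ?_, hvab⟩
      exact htransfer zb hzbU bb hbbperp hbbsub c hcU (by rw [hμ]; exact hgc_le)
    have hPZc : PZ c = c :=
      metricProj_unique (hPZ c) ⟨hcZ, fun z hz => by rw [sub_self, inner_zero_right]⟩
    have hPZw := hPZweak (fun k => u (m k)) c hweak'
    have hPZm : Tendsto (fun k => PZ (u (m k))) atTop (𝓝 (PU y)) := hPZu.comp hm_tend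
    have hceq : c = PU y := by
      have h1 : ∀ d : X, (⟪c - PU y, d⟫ : ℝ) = 0 := by
        intro d
        have h2 := hPZw d
        rw [hPZc] at h2
        have h3 : Tendsto (fun k => (⟪PZ (u (m k)), d⟫ : ℝ)) atTop (𝓝 ⟪PU y, d⟫) :=
          Filter.Tendsto.inner (𝕜 := ℝ) hPZm tendsto_const_nhds
        have h4 := tendsto_nhds_unique h2 h3
        rw [inner_sub_left, h4, sub_self]
      have h5 := h1 (c - PU y)
      rw [inner_self_eq_zero] at h5
      exact sub_eq_zero.mp h5
    have h6 : Tendsto (fun k => (⟪u (m k), w⟫ : ℝ)) atTop (𝓝 ⟪PU y, w⟫) := by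
      rw [← hceq]; exact hweak' w
    rw [Metric.tendsto_atTop] at h6
    obtain ⟨K, hK⟩ := h6 ε hε
    exact absurd (hK K le_rfl) (not_lt.mpr (hns (ψ K)))
  -- conjunct 5
  have hgoal5 : ∀ w : X, Tendsto (fun n : ℕ => (⟪prox (RU (T^[n] x)), w⟫ : ℝ)) atTop
      (𝓝 ⟪-v + PU y, w⟫) := by
    intro w
    have h1 : (fun n : ℕ => (⟪prox (RU (T^[n] x)), w⟫ : ℝ))
        = fun n => ⟪u n, w⟫ + ⟪δ n - v, w⟫ := by
      funext n
      rw [show prox (RU (T^[n] x)) = p n from rfl, hpdelta n, inner_add_left]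
    rw [h1]
    have h2 : Tendsto (fun n => (⟪δ n - v, w⟫ : ℝ)) atTop (𝓝 ⟪(0 : X) - v, w⟫) :=
      Filter.Tendsto.inner (𝕜 := ℝ) (hδ0.sub tendsto_const_nhds) tendsto_const_nhds
    have h3 := (hgoal1 w).add h2
    rw [show (⟪PU y, w⟫ : ℝ) + ⟪(0 : X) - v, w⟫ = ⟪-v + PU y, w⟫ from by
      rw [← inner_add_left]; congr 1; abel] at h3
    exact h3
  exact ⟨hgoal1, hgoal2, hgoal3, hconj4, hgoal5, hgoal6⟩
end
end

section
/- In the setting of the main theorem (X real Hilbert space, U closed subspace, g proper lsc convex, T = Id − P_U + Prox_g ∘ R_U, v = P_{closure(U − dom g)}(0) = P_{closure(ran(Id−T))}(0) ∈ U^⊥, 0 ∈ U^⊥ + dom g*, Z ≠ ∅, P_Z weak-to-weak continuous), set T̃ = Id − Prox_g + P_U ∘ (2 Prox_g − Id) and assume P_{closure(ran(Id − T̃))}(0) = −v. Let x ∈ X and let y(·) be given by y(w) = lim_{n→∞} P_F(nv + T^n w), where F = {z : z = T(z + v)}. Then: (i) P_U T̃^n = P_U T^n R_U for every n ∈ ℕ;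 (ii) T̃^n x − T̃^{n+1} x = Prox_g T̃^n x − 2 P_U Prox_g T̃^n x + P_U T̃^n x = P_U T̃^n x − R_U Prox_g T̃^n x → −v; (iii) P_U T̃^n x − P_U Prox_g T̃^n x → 0; (iv) P_U T̃^n x converges weakly to P_U y(R_U x), which is a minimizer of g(· − v) over U; (v) Prox_g T̃^n x converges weakly to P_U y(R_U x) − v ∈ dom g. -/
open scoped RealInnerProductSpace Pointwise
open Filter Topology

noncomputable section

variable {X : Type*}

section Aux
variable [NormedAddCommGroup X] [InnerProductSpace ℝ X]

lemma real_le_of_forall_pos_le_add' {a b : ℝ} (h : ∀ ε : ℝ, 0 < ε → a ≤ b + ε) : a ≤ b := by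
  by_contra hc
  push_neg at hc
  have := h ((a - b) / 2) (by linarith)
  linarith

variable {g : X → EReal}

lemma esubdiff_ne_top (hp : EProper g) {x u : X} (hu : u ∈ ESubdiff g x) : g x ≠ ⊤ := by
  obtain ⟨x0, hx0⟩ := hp.2
  intro htop
  have h1 := hu x0
  rw [htop, EReal.top_add_of_ne_bot (EReal.coe_ne_bot _), top_le_iff] at h1
  exact hx0 h1

lemma esubdiff_real (hp : EProper g) {x u : X} (hu : u ∈ ESubdiff g x)
    {z : X} (hz : g z ≠ ⊤) : (g x).toReal + ⟪z - x, u⟫ ≤ (g z).toReal := by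
  have hx := esubdiff_ne_top hp hu
  have h1 := hu z
  rw [← EReal.coe_toReal hx (hp.1 x), ← EReal.coe_toReal hz (hp.1 z), ← EReal.coe_add] at h1
  exact_mod_cast h1

lemma esubdiff_of_real (hp : EProper g) {x u : X} (hx : g x ≠ ⊤)
    (hr : ∀ z : X, g z ≠ ⊤ → (g x).toReal + ⟪z - x, u⟫ ≤ (g z).toReal) :
    u ∈ ESubdiff g x := by
  intro z
  by_cases hz : g z = ⊤
  · rw [hz]; exact le_top
  · rw [← EReal.coe_toReal hx (hp.1 x), ← EReal.coe_toReal hz (hp.1 z), ← EReal.coe_add]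
    exact_mod_cast hr z hz

lemma esubdiff_mono (hp : EProper g) {x1 x2 u1 u2 : X}
    (h1 : u1 ∈ ESubdiff g x1) (h2 : u2 ∈ ESubdiff g x2) :
    0 ≤ ⟪x1 - x2, u1 - u2⟫ := by
  have hx1 := esubdiff_ne_top hp h1
  have hx2 := esubdiff_ne_top hp h2
  have a1 := esubdiff_real hp h1 hx2
  have a2 := esubdiff_real hp h2 hx1
  have e1 : (⟪x1 - x2, u1 - u2⟫ : ℝ) = -((⟪x2 - x1, u1⟫ : ℝ) + ⟪x1 - x2, u2⟫) := by
    rw [inner_sub_right, show x2 - x1 = -(x1 - x2) by abel, inner_neg_left]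
    ring
  rw [e1]; linarith

lemma esubdiff_min (hp : EProper g) {x1 b : X} (hb : b ∈ ESubdiff g x1) {y : X}
    (horth : (⟪y - x1, b⟫ : ℝ) = 0) : g x1 ≤ g y := by
  have := hb y
  rw [horth] at this
  simpa using this

lemma esubdiff_transfer (hp : EProper g) {x1 x2 b : X} (hb : b ∈ ESubdiff g x1)
    (hle : g x2 ≤ g x1) (horth : (⟪x1 - x2, b⟫ : ℝ) = 0) : b ∈ ESubdiff g x2 := by
  have hx1 := esubdiff_ne_top hp hb
  have hx2 : g x2 ≠ ⊤ := fun h => hx1 (top_le_iff.1 (h ▸ hle))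
  apply esubdiff_of_real hp hx2
  intro z hz
  have h1 := esubdiff_real hp hb hz
  have h2 : (g x2).toReal ≤ (g x1).toReal := EReal.toReal_le_toReal hle (hp.1 x2) hx1
  have e : (⟪z - x2, b⟫ : ℝ) = ⟪z - x1, b⟫ + ⟪x1 - x2, b⟫ := by
    rw [← inner_add_left]
    have : z - x1 + (x1 - x2) = z - x2 := by abel
    rw [this]
  rw [e, horth]; linarith

variable {prox : X → X}

lemma prox_ne_top (hp : EProper g) (hpx : IsProx g prox) (q : X) : g (prox q) ≠ ⊤ := by
  obtain ⟨x0, hx0⟩ := hp.2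
  intro htop
  have h1 := hpx q x0
  rw [htop, EReal.top_add_of_ne_bot (EReal.coe_ne_bot _),
    ← EReal.coe_toReal hx0 (hp.1 x0), ← EReal.coe_add, top_le_iff] at h1
  exact EReal.coe_ne_top _ h1

lemma prox_real (hp : EProper g) (hpx : IsProx g prox) {q y : X} (hy : g y ≠ ⊤) :
    (g (prox q)).toReal + ‖prox q - q‖ ^ 2 / 2 ≤ (g y).toReal + ‖y - q‖ ^ 2 / 2 := by
  have h1 := hpx q y
  have h2 := prox_ne_top hp hpx q
  rw [← EReal.coe_toReal h2 (hp.1 _), ← EReal.coe_toReal hy (hp.1 y), ← EReal.coe_add,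
    ← EReal.coe_add] at h1
  exact_mod_cast h1

lemma prox_subgrad (hp : EProper g) (hc : EConvexOn g) (hpx : IsProx g prox) (q : X) :
    q - prox q ∈ ESubdiff g (prox q) := by
  have hpne := prox_ne_top hp hpx q
  apply esubdiff_of_real hp hpne
  intro z hz
  have key : ∀ t : ℝ, 0 < t → t ≤ 1 →
      (g (prox q)).toReal + ⟪z - prox q, q - prox q⟫ ≤ (g z).toReal + t * (‖z - prox q‖ ^ 2 / 2) := by
    intro t ht0 ht1
    have hcv := hc (prox q) z (1 - t) t (by linarith) ht0.le (by ring)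
    have hyt_le : g ((1 - t) • prox q + t • z)
        ≤ (((1 - t) * (g (prox q)).toReal + t * (g z).toReal : ℝ) : EReal) := by
      rw [EReal.coe_add, EReal.coe_mul, EReal.coe_mul, EReal.coe_toReal hpne (hp.1 _),
        EReal.coe_toReal hz (hp.1 z)]
      exact hcv
    have hyt_ne : g ((1 - t) • prox q + t • z) ≠ ⊤ :=
      fun h => EReal.coe_ne_top _ (top_le_iff.1 (h ▸ hyt_le))
    have hyt_re : (g ((1 - t) • prox q + t • z)).toReal
        ≤ (1 - t) * (g (prox q)).toReal + t * (g z).toReal := by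
      have := EReal.toReal_le_toReal hyt_le (hp.1 _) (EReal.coe_ne_top _)
      rwa [EReal.toReal_coe] at this
    have hmin := prox_real hp hpx (q := q) hyt_ne
    have hnorm : ‖((1 - t) • prox q + t • z) - q‖ ^ 2
        = ‖prox q - q‖ ^ 2 + 2 * t * ⟪prox q - q, z - prox q⟫ + t ^ 2 * ‖z - prox q‖ ^ 2 := by
      have h5 : ((1 - t) • prox q + t • z) - q = (prox q - q) + t • (z - prox q) := by
        rw [sub_smul, one_smul, smul_sub]; abel
      rw [h5, norm_add_sq_real, real_inner_smul_right, norm_smul, Real.norm_eq_abs, mul_pow,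
        sq_abs]
      ring
    have h6 : (⟪z - prox q, q - prox q⟫ : ℝ) = -⟪prox q - q, z - prox q⟫ := by
      rw [show q - prox q = -(prox q - q) by abel, inner_neg_right, real_inner_comm]
    have h7 : t * ((g (prox q)).toReal + ⟪z - prox q, q - prox q⟫)
        ≤ t * ((g z).toReal + t * (‖z - prox q‖ ^ 2 / 2)) := by
      nlinarith [hmin, hyt_re, hnorm, h6]
    exact le_of_mul_le_mul_left h7 ht0
  apply real_le_of_forall_pos_le_add'
  intro ε hε
  rcases le_or_gt (‖z - prox q‖ ^ 2 / 2) ε with hle | hlt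
  · have := key 1 one_pos le_rfl
    linarith
  · have hpos : 0 < ‖z - prox q‖ ^ 2 / 2 := lt_trans hε hlt
    have ht0 : 0 < ε / (‖z - prox q‖ ^ 2 / 2) := div_pos hε hpos
    have ht1 : ε / (‖z - prox q‖ ^ 2 / 2) ≤ 1 := by
      rw [div_le_one hpos]; exact hlt.le
    have hk := key _ ht0 ht1
    rw [div_mul_cancel₀ _ (ne_of_gt hpos)] at hk
    linarith

lemma prox_firm (hp : EProper g) (hc : EConvexOn g) (hpx : IsProx g prox) (a b : X) :
    ‖prox a - prox b‖ ^ 2 ≤ ⟪prox a - prox b, a - b⟫ := by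
  have h0 := esubdiff_mono hp (prox_subgrad hp hc hpx a) (prox_subgrad hp hc hpx b)
  have e1 : (⟪prox a - prox b, (a - prox a) - (b - prox b)⟫ : ℝ)
      = ⟪prox a - prox b, a - b⟫ - ‖prox a - prox b‖ ^ 2 := by
    rw [show (a - prox a) - (b - prox b) = (a - b) - (prox a - prox b) by abel,
      inner_sub_right, real_inner_self_eq_norm_sq]
  rw [e1] at h0
  linarith

lemma prox_nonexp (hp : EProper g) (hc : EConvexOn g) (hpx : IsProx g prox) (a b : X) :
    ‖prox a - prox b‖ ≤ ‖a - b‖ := by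
  rcases eq_or_ne (prox a) (prox b) with he | he
  · simp [he]
  · have h1 := prox_firm hp hc hpx a b
    have h2 : (⟪prox a - prox b, a - b⟫ : ℝ) ≤ ‖prox a - prox b‖ * ‖a - b‖ :=
      real_inner_le_norm _ _
    have h3 : 0 < ‖prox a - prox b‖ := by
      rw [norm_pos_iff]; exact sub_ne_zero.2 he
    nlinarith

lemma eq_prox (hp : EProper g) (hc : EConvexOn g) (hpx : IsProx g prox) {q p : X}
    (hsub : q - p ∈ ESubdiff g p) : p = prox q := by
  have hpne := esubdiff_ne_top hp hsub
  have hPne := prox_ne_top hp hpx q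
  have h1 := esubdiff_real hp hsub (z := prox q) hPne
  have h2 := prox_real hp hpx (q := q) (y := p) hpne
  have e1 : ‖prox q - q‖ ^ 2 = ‖prox q - p‖ ^ 2 + 2 * ⟪prox q - p, p - q⟫ + ‖p - q‖ ^ 2 := by
    rw [show prox q - q = (prox q - p) + (p - q) by abel, norm_add_sq_real]
  have e2 : (⟪prox q - p, q - p⟫ : ℝ) = -⟪prox q - p, p - q⟫ := by
    rw [show q - p = -(p - q) by abel, inner_neg_right]
  have h4 : ‖prox q - p‖ ≤ 0 := by nlinarith [norm_nonneg (prox q - p)]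
  have h5 : prox q - p = 0 := norm_le_zero_iff.1 h4
  have := sub_eq_zero.1 h5
  exact this.symm

lemma exists_ultra_weak_limit [CompleteSpace X] (𝒰 : Ultrafilter ℕ) (s : ℕ → X)
    (M : ℝ) (hM : ∀ n, ‖s n‖ ≤ M) :
    ∃ c : X, ∀ w : X, Tendsto (fun n => (⟪s n, w⟫ : ℝ)) ↑𝒰 (𝓝 (⟪c, w⟫ : ℝ)) := by
  have hex : ∀ w : X, ∃ L : ℝ, Tendsto (fun n => (⟪s n, w⟫ : ℝ)) ↑𝒰 (𝓝 L) := by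
    intro w
    have hmem : ∀ n, (⟪s n, w⟫ : ℝ) ∈ Set.Icc (-(M * ‖w‖)) (M * ‖w‖) := by
      intro n
      have h1 : |(⟪s n, w⟫ : ℝ)| ≤ M * ‖w‖ :=
        le_trans (abs_real_inner_le_norm _ _) (mul_le_mul_of_nonneg_right (hM n) (norm_nonneg w))
      exact abs_le.1 h1
    have hle : ↑(𝒰.map fun n => (⟪s n, w⟫ : ℝ)) ≤ 𝓟 (Set.Icc (-(M * ‖w‖)) (M * ‖w‖)) := by
      rw [Ultrafilter.coe_map]
      exact le_principal_iff.2 (mem_map.2 (Filter.univ_mem' hmem))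
    obtain ⟨L, _, hL⟩ := isCompact_Icc.ultrafilter_le_nhds _ hle
    refine ⟨L, ?_⟩
    rw [Filter.Tendsto, ← Ultrafilter.coe_map]
    exact hL
  choose L hL using hex
  have hadd : ∀ w1 w2, L (w1 + w2) = L w1 + L w2 := by
    intro w1 w2
    have h1 : Tendsto (fun n => (⟪s n, w1⟫ : ℝ) + ⟪s n, w2⟫) ↑𝒰 (𝓝 (L w1 + L w2)) :=
      (hL w1).add (hL w2)
    have h2 : (fun n => (⟪s n, w1⟫ : ℝ) + ⟪s n, w2⟫) = fun n => (⟪s n, w1 + w2⟫ : ℝ) := by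
      funext n; rw [inner_add_right]
    rw [h2] at h1
    exact tendsto_nhds_unique (hL _) h1
  have hsmul : ∀ (r : ℝ) (w : X), L (r • w) = r * L w := by
    intro r w
    have h1 : Tendsto (fun n => r * (⟪s n, w⟫ : ℝ)) ↑𝒰 (𝓝 (r * L w)) := (hL w).const_mul r
    have h2 : (fun n => r * (⟪s n, w⟫ : ℝ)) = fun n => (⟪s n, r • w⟫ : ℝ) := by
      funext n; rw [real_inner_smul_right]
    rw [h2] at h1
    exact tendsto_nhds_unique (hL _) h1
  have hbound : ∀ w, |L w| ≤ M * ‖w‖ := by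
    intro w
    have h1 : Tendsto (fun n => |(⟪s n, w⟫ : ℝ)|) ↑𝒰 (𝓝 |L w|) := (hL w).abs
    refine le_of_tendsto h1 (Filter.Eventually.of_forall fun n => ?_)
    exact le_trans (abs_real_inner_le_norm _ _) (mul_le_mul_of_nonneg_right (hM n) (norm_nonneg w))
  let ℓ : X →ₗ[ℝ] ℝ :=
    { toFun := L, map_add' := hadd, map_smul' := fun r w => by simpa using hsmul r w }
  let ℓC : X →L[ℝ] ℝ := LinearMap.mkContinuous ℓ M (fun w => by
    simpa [ℓ, Real.norm_eq_abs] using hbound w)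
  refine ⟨(InnerProductSpace.toDual ℝ X).symm ℓC, fun w => ?_⟩
  have h3 : (⟪(InnerProductSpace.toDual ℝ X).symm ℓC, w⟫ : ℝ) = ℓC w :=
    InnerProductSpace.toDual_symm_apply
  rw [h3]
  exact hL w

lemma mem_of_weak_tendsto [CompleteSpace X] {S : Set X} (hSc : IsClosed S)
    (hconv : Convex ℝ S) (hne : S.Nonempty) {l : Filter ℕ} [l.NeBot] {p : ℕ → X} {c : X}
    (hp : ∀ᶠ n in l, p n ∈ S) (hw : ∀ w : X, Tendsto (fun n => (⟪p n, w⟫ : ℝ)) l (𝓝 ⟪c, w⟫)) :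
    c ∈ S := by
  obtain ⟨P, hPS, hPeq⟩ := exists_norm_eq_iInf_of_complete_convex hne hSc.isComplete hconv c
  have hchar := (norm_eq_iInf_iff_real_inner_le_zero hconv hPS).1 hPeq
  have h3 := (hw (c - P)).sub_const (⟪P, c - P⟫ : ℝ)
  have h4 : (fun n => (⟪p n, c - P⟫ : ℝ) - ⟪P, c - P⟫) = fun n => (⟪c - P, p n - P⟫ : ℝ) := by
    funext n; rw [← inner_sub_left, real_inner_comm]
  have h5 : (⟪c, c - P⟫ : ℝ) - ⟪P, c - P⟫ = ⟪c - P, c - P⟫ := by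
    rw [← inner_sub_left, real_inner_comm]
  rw [h4, h5] at h3
  have h6 : (⟪c - P, c - P⟫ : ℝ) ≤ 0 := le_of_tendsto h3 (hp.mono fun n hn => hchar _ hn)
  have h7 : c - P = 0 := inner_self_eq_zero.1 (le_antisymm h6 real_inner_self_nonneg)
  rw [show c = P from sub_eq_zero.1 h7]
  exact hPS

end Aux

set_option maxHeartbeats 4000000 in
/-- **switching the order of the operators.** In the setting of the
main theorem, let `T̃ = Id − Prox_g + P_U ∘ (2 Prox_g − Id)` and suppose the
minimal displacement vector of `T̃` is `−v`. Then, with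
`y(w) = lim_n P_F(nv + Tⁿw)`:
(i) `P_U T̃ⁿ = P_U Tⁿ R_U`; (ii) `T̃ⁿx − T̃ⁿ⁺¹x = Prox_g T̃ⁿx − 2 P_U Prox_g T̃ⁿx +
P_U T̃ⁿx = P_U T̃ⁿx − R_U Prox_g T̃ⁿx → −v`; (iii) `P_U T̃ⁿx − P_U Prox_g T̃ⁿx → 0`;
(iv) `P_U T̃ⁿx ⇀ P_U y(R_U x)`, a minimizer of `g(·−v)` over `U`;
(v) `Prox_g T̃ⁿx ⇀ P_U y(R_U x) − v ∈ dom g`. -/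
theorem DR_switched_order
    [NormedAddCommGroup X] [InnerProductSpace ℝ X] [CompleteSpace X]
    (U : Submodule ℝ X) (hUclosed : IsClosed (U : Set X)) [U.HasOrthogonalProjection]
    (g : X → EReal) (hgproper : EProper g) (hglsc : LowerSemicontinuous g)
    (hgconv : EConvexOn g)
    (prox : X → X) (hprox : IsProx g prox)
    (PU RU T Ttil : X → X)
    (hPU : ∀ z, PU z = (U.orthogonalProjectionOnto z : X))
    (hRU : ∀ z, RU z = 2 • PU z - z)
    (hT : ∀ z, T z = z - PU z + prox (RU z))
    (hTtil : ∀ z, Ttil z = z - prox z + PU (2 • prox z - z))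
    (v : X)
    (hv : IsMetricProj (closure (Set.range fun z => z - T z)) 0 v)
    (hvgap : IsMetricProj (closure ((U : Set X) - {z | g z ≠ ⊤})) 0 v)
    (hvU : v ∈ Uᗮ)
    (hvtil : IsMetricProj (closure (Set.range fun z => z - Ttil z)) 0 (-v))
    (hCQ : ∃ u w : X, u ∈ Uᗮ ∧ EConj g w ≠ ⊤ ∧ u + w = 0)
    (Z : Set X)
    (hZ : Z = {z | ∃ a b : X, a ∈ normalCone U z ∧ b ∈ ESubdiff g (z - v) ∧ v = a + b})
    (hZne : Z.Nonempty)
    (PZ : X → X) (hPZ : ∀ w : X, IsMetricProj Z w (PZ w))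
    (hPZweak : ∀ (s : ℕ → X) (a : X),
      (∀ w : X, Tendsto (fun n => (⟪s n, w⟫ : ℝ)) atTop (𝓝 ⟪a, w⟫)) →
      ∀ w : X, Tendsto (fun n => (⟪PZ (s n), w⟫ : ℝ)) atTop (𝓝 ⟪PZ a, w⟫))
    (F : Set X) (hF : F = {z | z = T (z + v)})
    (PF : X → X) (hPF : ∀ w : X, IsMetricProj F w (PF w))
    (x ytil : X)
    (hytil : Tendsto (fun n : ℕ => PF ((n : ℝ) • v + T^[n] (RU x))) atTop (𝓝 ytil)) :
    -- (i)
    (∀ (n : ℕ) (z : X), PU (Ttil^[n] z) = PU (T^[n] (RU z))) ∧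
    -- (ii)
    (∀ n : ℕ,
      Ttil^[n] x - Ttil^[n+1] x =
        prox (Ttil^[n] x) - 2 • PU (prox (Ttil^[n] x)) + PU (Ttil^[n] x) ∧
      Ttil^[n] x - Ttil^[n+1] x = PU (Ttil^[n] x) - RU (prox (Ttil^[n] x))) ∧
    Tendsto (fun n : ℕ => Ttil^[n] x - Ttil^[n+1] x) atTop (𝓝 (-v)) ∧
    -- (iii)
    Tendsto (fun n : ℕ => PU (Ttil^[n] x) - PU (prox (Ttil^[n] x))) atTop (𝓝 0) ∧
    -- (iv)
    (∀ w : X, Tendsto (fun n : ℕ => (⟪PU (Ttil^[n] x), w⟫ : ℝ)) atTop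
      (𝓝 ⟪PU ytil, w⟫)) ∧
    PU ytil ∈ U ∧ (∀ u ∈ U, g (PU ytil - v) ≤ g (u - v)) ∧
    -- (v)
    (∀ w : X, Tendsto (fun n : ℕ => (⟪prox (Ttil^[n] x), w⟫ : ℝ)) atTop
      (𝓝 ⟪PU ytil - v, w⟫)) ∧
    g (PU ytil - v) ≠ ⊤ := by
  -- ## basic PU facts
  have PUadd : ∀ a b : X, PU (a + b) = PU a + PU b := by
    intro a b; simp only [hPU, map_add, Submodule.coe_add]
  have PUsub : ∀ a b : X, PU (a - b) = PU a - PU b := by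
    intro a b; simp only [hPU, map_sub, Submodule.coe_sub]
  have nsmul2 : ∀ a : X, (2 : ℕ) • a = a + a := fun a => two_smul ℕ a
  have PUmem : ∀ a : X, PU a ∈ U := by
    intro a; rw [hPU]; exact (U.orthogonalProjectionOnto a).2
  have PUid : ∀ a ∈ U, PU a = a := by
    intro a ha; rw [hPU]; exact Submodule.starProjection_eq_self_iff.2 ha
  have PUorth : ∀ a ∈ Uᗮ, PU a = 0 := by
    intro a ha; rw [hPU]
    have := Submodule.orthogonalProjectionOnto_apply_of_mem_orthogonal ha
    rw [this]; simp
  have PUperp : ∀ a : X, a - PU a ∈ Uᗮ := by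
    intro a; rw [hPU]; exact Submodule.sub_starProjection_mem_orthogonal a
  have PUidem : ∀ a : X, PU (PU a) = PU a := fun a => PUid _ (PUmem a)
  have PU2 : ∀ a : X, PU (2 • a) = 2 • PU a := by
    intro a; rw [nsmul2, PUadd, nsmul2]
  have innerUperp : ∀ u ∈ U, ∀ w ∈ Uᗮ, (⟪u, w⟫ : ℝ) = 0 := by
    intro u hu w hw; exact Submodule.inner_right_of_mem_orthogonal hu hw
  have PUpyth : ∀ a : X, ‖a‖ ^ 2 = ‖PU a‖ ^ 2 + ‖a - PU a‖ ^ 2 := by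
    intro a
    have h1 : a = PU a + (a - PU a) := by abel
    have h2 : (⟪PU a, a - PU a⟫ : ℝ) = 0 := innerUperp _ (PUmem a) _ (PUperp a)
    calc ‖a‖ ^ 2 = ‖PU a + (a - PU a)‖ ^ 2 := by rw [← h1]
      _ = ‖PU a‖ ^ 2 + 2 * ⟪PU a, a - PU a⟫ + ‖a - PU a‖ ^ 2 := norm_add_sq_real _ _
      _ = ‖PU a‖ ^ 2 + ‖a - PU a‖ ^ 2 := by rw [h2]; ring
  have PUnorm : ∀ a : X, ‖PU a‖ ≤ ‖a‖ := by
    intro a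
    have := PUpyth a
    have h1 : ‖PU a‖ ^ 2 ≤ ‖a‖ ^ 2 := by nlinarith [sq_nonneg ‖a - PU a‖]
    nlinarith [norm_nonneg (PU a), norm_nonneg a]
  have PUcont : Continuous PU := by
    have h1 : PU = fun z => (U.orthogonalProjectionOnto z : X) := funext hPU
    rw [h1]
    exact continuous_subtype_val.comp (U.orthogonalProjectionOnto).continuous
  have PUv : PU v = 0 := PUorth v hvU
  -- ## RU facts
  have PURU : ∀ a : X, PU (RU a) = PU a := by
    intro a; rw [hRU, PUsub, PU2, PUidem, nsmul2]; abel
  have RURU : ∀ a : X, RU (RU a) = a := by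
    intro a; rw [hRU (RU a), PURU, hRU a]; simp only [nsmul2]; abel
  have RUlin : ∀ a b : X, RU a - RU b = RU (a - b) := by
    intro a b; rw [hRU a, hRU b, hRU (a - b), PUsub]; simp only [nsmul2]; abel
  have RUnorm : ∀ a : X, ‖RU a‖ = ‖a‖ := by
    intro a
    have h1 : RU a = PU a - (a - PU a) := by rw [hRU, nsmul2]; abel
    have h2 : ‖RU a‖ ^ 2 = ‖a‖ ^ 2 := by
      rw [h1, norm_sub_sq_real, innerUperp _ (PUmem a) _ (PUperp a), PUpyth a]; ring
    calc ‖RU a‖ = Real.sqrt (‖RU a‖ ^ 2) := (Real.sqrt_sq (norm_nonneg _)).symm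
      _ = Real.sqrt (‖a‖ ^ 2) := by rw [h2]
      _ = ‖a‖ := Real.sqrt_sq (norm_nonneg _)
  have RUv : RU v = -v := by rw [hRU, PUv]; simp
  have RUcont : Continuous RU := by
    have h1 : RU = fun z => PU z + PU z - z := by
      funext z; rw [hRU z, nsmul2]
    rw [h1]
    exact (PUcont.add PUcont).sub continuous_id
  -- ## prox facts
  have proxCont : Continuous prox := by
    have hl : LipschitzWith 1 prox := by
      apply LipschitzWith.of_dist_le_mul
      intro a b
      rw [dist_eq_norm, dist_eq_norm, NNReal.coe_one, one_mul]
      exact prox_nonexp hgproper hgconv hprox a b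
    exact hl.continuous
  have Tcont : Continuous T := by
    have hTf : T = fun z => z - PU z + prox (RU z) := funext hT
    rw [hTf]
    exact (continuous_id.sub PUcont).add (proxCont.comp RUcont)
  -- ## conjugation : Ttil = RU ∘ T ∘ RU
  have Tconj : ∀ y : X, Ttil y = RU (T (RU y)) := by
    intro y
    rw [hT (RU y), RURU, hRU (RU y - PU (RU y) + prox y)]
    rw [PUadd, PUsub, PURU, PUidem, hRU y]
    rw [hTtil y, PUsub, PU2]; simp only [nsmul2]
    abel
  have Titer : ∀ (n : ℕ) (y : X), Ttil^[n] y = RU (T^[n] (RU y)) := by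
    intro n
    induction n with
    | zero => intro y; simp [RURU y]  -- (RU (RU y)) = y
    | succ n ih =>
      intro y
      rw [Function.iterate_succ_apply, Function.iterate_succ_apply, ih (Ttil y), Tconj y, RURU]
  -- conclusion (i)
  have concl1 : ∀ (n : ℕ) (z : X), PU (Ttil^[n] z) = PU (T^[n] (RU z)) := by
    intro n z; rw [Titer n z, PURU]
  -- conclusion (ii) equalities
  have concl2 : ∀ n : ℕ,
      Ttil^[n] x - Ttil^[n+1] x =
        prox (Ttil^[n] x) - 2 • PU (prox (Ttil^[n] x)) + PU (Ttil^[n] x) ∧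
      Ttil^[n] x - Ttil^[n+1] x = PU (Ttil^[n] x) - RU (prox (Ttil^[n] x)) := by
    intro n
    have h1 : Ttil^[n+1] x = Ttil (Ttil^[n] x) := Function.iterate_succ_apply' Ttil n x
    constructor
    · rw [h1, hTtil (Ttil^[n] x), PUsub, PU2]; simp only [nsmul2]
      abel
    · rw [h1, hTtil (Ttil^[n] x), PUsub, PU2, hRU (prox (Ttil^[n] x))]; simp only [nsmul2]
      abel
  -- ## the driving sequences (for T, with starting point w0)
  set w0 := RU x with hw0
  set e : ℕ → X := fun n => T^[n] w0 - T^[n+1] w0 with he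
  set s : ℕ → X := fun n => PU (T^[n] w0) with hs
  set p : ℕ → X := fun n => prox (RU (T^[n] w0)) with hp
  set zz : ℕ → X := fun n => (n : ℝ) • v + T^[n] w0 with hzz
  have hen : ∀ n, e n = s n - p n := by
    intro n
    have h1 : T^[n+1] w0 = T (T^[n] w0) := Function.iterate_succ_apply' T n w0
    simp only [he, hs, hp]
    rw [h1, hT (T^[n] w0)]
    abel
  have hzsucc : ∀ n, zz (n + 1) = zz n + (v - e n) := by
    intro n
    simp only [hzz, he]
    push_cast
    rw [add_smul, one_smul]
    abel

  -- ## generalized solution z0 and fixed point z0 - b0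
  obtain ⟨z0, hz0Z⟩ := hZne
  rw [hZ] at hz0Z
  obtain ⟨a0, b0, ⟨hz0U, ha0⟩, hb0, hvab⟩ := hz0Z
  have hb0O : b0 ∈ Uᗮ := by
    have h1 : b0 = v - a0 := by rw [hvab]; abel
    rw [h1]; exact Submodule.sub_mem _ hvU ha0
  have hmk : ∀ c' bc : X, c' ∈ U → bc ∈ Uᗮ → bc ∈ ESubdiff g (c' - v) →
      c' - bc = T ((c' - bc) + v) := by
    intro c' bc hc'U hbcO hbc
    have hPU1 : PU ((c' - bc) + v) = c' := by
      rw [PUadd, PUsub, PUid c' hc'U, PUorth bc hbcO, PUorth v hvU]; abel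
    have hq : RU ((c' - bc) + v) = c' + bc - v := by
      rw [hRU, hPU1, nsmul2]; abel
    have hsub2 : (c' + bc - v) - (c' - v) ∈ ESubdiff g (c' - v) := by
      have h1 : (c' + bc - v) - (c' - v) = bc := by abel
      rw [h1]; exact hbc
    have hprox1 : prox (RU ((c' - bc) + v)) = c' - v := by
      rw [hq]; exact (eq_prox hgproper hgconv hprox hsub2).symm
    rw [hT, hPU1, hprox1]; abel
  have hf0 : z0 - b0 = T ((z0 - b0) + v) := hmk z0 b0 hz0U hb0O hb0
  -- ## structure of fixed points of z ↦ T (z + v)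
  have hFsub : ∀ f : X, f = T (f + v) →
      (PU f - f) ∈ ESubdiff g (PU f - v) ∧ (PU f - f) ∈ Uᗮ := by
    intro f hf
    have hPUf : PU (f + v) = PU f := by rw [PUadd, PUorth v hvU, add_zero]
    have hf2 : f = f + v - PU f + prox (RU (f + v)) := by
      conv_lhs => rw [hf]
      rw [hT, hPUf]
    have hp2 : prox (RU (f + v)) = PU f - v := by
      calc prox (RU (f+v)) = (f + v - PU f + prox (RU (f+v))) - (f + v - PU f) := by abel
        _ = f - (f + v - PU f) := by rw [← hf2]
        _ = PU f - v := by abel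
    have hq2 : RU (f + v) - (PU f - v) = PU f - f := by
      rw [hRU, hPUf, nsmul2]; abel
    have h3 := prox_subgrad hgproper hgconv hprox (RU (f + v))
    rw [hp2, hq2] at h3
    refine ⟨h3, ?_⟩
    have h4 : PU f - f = -(f - PU f) := by abel
    rw [h4]; exact Submodule.neg_mem _ (PUperp f)
  have hminval : ∀ f : X, f = T (f + v) → g (PU f - v) = g (z0 - v) := by
    intro f hf
    obtain ⟨hsub, horth⟩ := hFsub f hf
    have h1 : g (PU f - v) ≤ g (z0 - v) := by
      apply esubdiff_min hgproper hsub
      have h2 : (z0 - v) - (PU f - v) = z0 - PU f := by abel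
      rw [h2]
      exact innerUperp _ (Submodule.sub_mem _ hz0U (PUmem f)) _ horth
    have h2 : g (z0 - v) ≤ g (PU f - v) := by
      apply esubdiff_min hgproper hb0
      have h3 : (PU f - v) - (z0 - v) = PU f - z0 := by abel
      rw [h3]
      exact innerUperp _ (Submodule.sub_mem _ (PUmem f) hz0U) _ hb0O
    exact le_antisymm h1 h2
  -- ## firm nonexpansiveness of Id - T
  have Sfirm : ∀ a b : X, ‖(a - T a) - (b - T b)‖ ^ 2 ≤ ⟪(a - T a) - (b - T b), a - b⟫ := by
    intro a b
    have hST : (a - T a) - (b - T b) = PU (a - b) - (prox (RU a) - prox (RU b)) := by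
      rw [hT a, hT b, PUsub]; abel
    have hP : (⟪PU (a - b), a - b⟫ : ℝ) = ‖PU (a - b)‖ ^ 2 := by
      have h1 : a - b = PU (a - b) + ((a - b) - PU (a - b)) := by abel
      calc (⟪PU (a - b), a - b⟫ : ℝ)
          = ⟪PU (a - b), PU (a - b) + ((a - b) - PU (a - b))⟫ := by rw [← h1]
        _ = ⟪PU (a-b), PU (a-b)⟫ + ⟪PU (a-b), (a - b) - PU (a-b)⟫ := inner_add_right _ _ _
        _ = ‖PU (a - b)‖ ^ 2 := by
            rw [innerUperp _ (PUmem _) _ (PUperp _), real_inner_self_eq_norm_sq]; ring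
    have hQ := prox_firm hgproper hgconv hprox (RU a) (RU b)
    have hRab : RU a - RU b = PU (a - b) + PU (a - b) - (a - b) := by
      rw [RUlin, hRU (a - b)]; simp only [nsmul2]
    rw [hRab] at hQ
    have h2 : (⟪prox (RU a) - prox (RU b), PU (a - b) + PU (a - b) - (a - b)⟫ : ℝ)
        = 2 * ⟪PU (a - b), prox (RU a) - prox (RU b)⟫ - ⟪prox (RU a) - prox (RU b), a - b⟫ := by
      rw [inner_sub_right, inner_add_right, real_inner_comm (PU (a-b))]
      ring
    rw [h2] at hQ
    have h4 : ‖PU (a - b) - (prox (RU a) - prox (RU b))‖ ^ 2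
        = ‖PU (a-b)‖ ^ 2 - 2 * ⟪PU (a-b), prox (RU a) - prox (RU b)⟫
          + ‖prox (RU a) - prox (RU b)‖ ^ 2 := norm_sub_sq_real _ _
    have h3 : (⟪PU (a - b) - (prox (RU a) - prox (RU b)), a - b⟫ : ℝ)
        = ‖PU (a - b)‖ ^ 2 - ⟪prox (RU a) - prox (RU b), a - b⟫ := by
      rw [inner_sub_left, hP]
    rw [hST, h3, h4]
    linarith
  -- ## minimal displacement inequality
  have hvchar : ∀ n, ‖v‖ ^ 2 ≤ (⟪e n, v⟫ : ℝ) := by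
    intro n
    have hmem : e n ∈ closure (Set.range fun z => z - T z) := by
      apply subset_closure
      refine ⟨T^[n] w0, ?_⟩
      simp only [he]
      rw [Function.iterate_succ_apply' T n w0]
    have h1 := hv.2 _ hmem
    have h2 : (⟪e n - v, 0 - v⟫ : ℝ) = -⟪e n, v⟫ + ‖v‖ ^ 2 := by
      rw [zero_sub, inner_neg_right, inner_sub_left, real_inner_self_eq_norm_sq]; ring
    rw [h2] at h1
    linarith
  have hvE : ∀ n, 0 ≤ (⟪v, e n - v⟫ : ℝ) := by
    intro n
    have h1 : (⟪v, e n - v⟫ : ℝ) = ⟪e n, v⟫ - ‖v‖ ^ 2 := by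
      rw [inner_sub_right, real_inner_comm v (e n), real_inner_self_eq_norm_sq]
    rw [h1]; linarith [hvchar n]
  -- ## Fejér monotonicity
  have hfej : ∀ n : ℕ, ‖zz (n+1) - (z0 - b0)‖ ^ 2
      ≤ ‖zz n - (z0 - b0)‖ ^ 2 - ‖e n - v‖ ^ 2 - 2 * ((n:ℝ)+1) * ⟪v, e n - v⟫ := by
    intro n
    have hSf0 : (z0 - b0 + v) - T (z0 - b0 + v) = v := by
      conv_lhs => rw [← hf0]
      abel
    have hSe : T^[n] w0 - T (T^[n] w0) = e n := by
      simp only [he]; rw [Function.iterate_succ_apply' T n w0]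
    have hF1 := Sfirm (T^[n] w0) (z0 - b0 + v)
    rw [hSe, hSf0] at hF1
    have hexp : ‖zz (n+1) - (z0 - b0)‖ ^ 2
        = ‖zz n - (z0 - b0)‖ ^ 2 - 2 * ⟪zz n - (z0 - b0), e n - v⟫ + ‖e n - v‖ ^ 2 := by
      have h1 : zz (n+1) - (z0 - b0) = (zz n - (z0 - b0)) - (e n - v) := by
        rw [hzsucc n]; abel
      rw [h1, norm_sub_sq_real]
    have hinner : (⟪zz n - (z0 - b0), e n - v⟫ : ℝ)
        = ⟪e n - v, T^[n] w0 - (z0 - b0 + v)⟫ + ((n:ℝ)+1) * ⟪v, e n - v⟫ := by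
      have h2 : zz n - (z0 - b0) = (T^[n] w0 - (z0 - b0 + v)) + ((n:ℝ)+1) • v := by
        simp only [hzz]
        rw [add_smul, one_smul]; abel
      rw [h2, inner_add_left, real_inner_smul_left,
        real_inner_comm (T^[n] w0 - (z0 - b0 + v)) (e n - v)]
    rw [hexp, hinner]
    have h5 : ‖e n - v‖ ^ 2 ≤ ⟪e n - v, T^[n] w0 - (z0 - b0 + v)⟫ := hF1
    linarith
  -- ## convergence e n → v
  have hDanti : Antitone (fun n => ‖zz n - (z0 - b0)‖ ^ 2) := by
    apply antitone_nat_of_succ_le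
    intro n
    have h2 : 0 ≤ 2 * ((n:ℝ)+1) * ⟪v, e n - v⟫ :=
      mul_nonneg (by positivity) (hvE n)
    have h3 := hfej n
    nlinarith [sq_nonneg ‖e n - v‖]
  obtain ⟨L, hL⟩ : ∃ L, Tendsto (fun n => ‖zz n - (z0 - b0)‖ ^ 2) atTop (𝓝 L) :=
    ⟨_, tendsto_atTop_ciInf hDanti ⟨0, by rintro y ⟨n, rfl⟩; positivity⟩⟩
  have hdiff0 : Tendsto (fun n => ‖zz n - (z0 - b0)‖ ^ 2 - ‖zz (n+1) - (z0 - b0)‖ ^ 2)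
      atTop (𝓝 0) := by
    have h2 : Tendsto (fun n : ℕ => ‖zz (n+1) - (z0 - b0)‖ ^ 2) atTop (𝓝 L) :=
      hL.comp (tendsto_add_atTop_nat 1)
    simpa using hL.sub h2
  have hEnorm : Tendsto (fun n => ‖e n - v‖) atTop (𝓝 0) := by
    have h3 : ∀ n, ‖e n - v‖
        ≤ Real.sqrt (‖zz n - (z0 - b0)‖ ^ 2 - ‖zz (n+1) - (z0 - b0)‖ ^ 2) := by
      intro n
      have h5 : 0 ≤ 2 * ((n:ℝ)+1) * ⟪v, e n - v⟫ := mul_nonneg (by positivity) (hvE n)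
      have h4 : ‖e n - v‖ ^ 2 ≤ ‖zz n - (z0 - b0)‖ ^ 2 - ‖zz (n+1) - (z0 - b0)‖ ^ 2 := by
        linarith [hfej n]
      calc ‖e n - v‖ = Real.sqrt (‖e n - v‖ ^ 2) := (Real.sqrt_sq (norm_nonneg _)).symm
        _ ≤ _ := Real.sqrt_le_sqrt h4
    have h6 : Tendsto (fun n => Real.sqrt (‖zz n - (z0 - b0)‖ ^ 2 - ‖zz (n+1) - (z0 - b0)‖ ^ 2))
        atTop (𝓝 0) := by
      have h7 := (Real.continuous_sqrt.tendsto 0).comp hdiff0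
      rw [Real.sqrt_zero] at h7; exact h7
    exact squeeze_zero (fun n => norm_nonneg _) h3 h6
  have hEtend : Tendsto (fun n => e n - v) atTop (𝓝 0) := by
    rw [tendsto_zero_iff_norm_tendsto_zero]; exact hEnorm
  have hetend : Tendsto e atTop (𝓝 v) := by
    have h1 := hEtend.add_const v
    simpa using h1
  -- ## bounds
  set Mz := ‖zz 0 - (z0 - b0)‖ + ‖z0 - b0‖ with hMzdef
  have sqle : ∀ a b : ℝ, 0 ≤ a → 0 ≤ b → a ^ 2 ≤ b ^ 2 → a ≤ b := by
    intro a b ha hb h; nlinarith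
  have hBz : ∀ n, ‖zz n - (z0 - b0)‖ ≤ ‖zz 0 - (z0 - b0)‖ := by
    intro n
    exact sqle _ _ (norm_nonneg _) (norm_nonneg _) (hDanti (Nat.zero_le n))
  have hMz : ∀ n, ‖zz n‖ ≤ Mz := by
    intro n
    calc ‖zz n‖ = ‖(zz n - (z0 - b0)) + (z0 - b0)‖ := by congr 1; abel
      _ ≤ ‖zz n - (z0 - b0)‖ + ‖z0 - b0‖ := norm_add_le _ _
      _ ≤ Mz := by rw [hMzdef]; linarith [hBz n]
  have hPUzz : ∀ n, PU (zz n) = s n := by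
    intro n
    simp only [hzz, hs]
    rw [PUadd]
    have h1 : PU ((n:ℝ) • v) = (n:ℝ) • PU v := by
      simp only [hPU, map_smul, Submodule.coe_smul]
    rw [h1, PUv, smul_zero, zero_add]
  have hMs : ∀ n, ‖s n‖ ≤ Mz := by
    intro n
    rw [← hPUzz n]
    exact le_trans (PUnorm _) (hMz n)
  have hMe : ∀ n, ‖e n‖ ≤ 2 * Mz + ‖v‖ := by
    intro n
    have h1 : e n = v + zz n - zz (n+1) := by rw [hzsucc n]; abel
    calc ‖e n‖ = ‖v + zz n - zz (n+1)‖ := by rw [h1]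
      _ ≤ ‖v + zz n‖ + ‖zz (n+1)‖ := norm_sub_le _ _
      _ ≤ ‖v‖ + ‖zz n‖ + ‖zz (n+1)‖ := by linarith [norm_add_le v (zz n)]
      _ ≤ 2 * Mz + ‖v‖ := by linarith [hMz n, hMz (n+1)]
  have hMr : ∀ n, ‖zz n - PU (zz n)‖ ≤ 2 * Mz := by
    intro n
    calc ‖zz n - PU (zz n)‖ ≤ ‖zz n‖ + ‖PU (zz n)‖ := norm_sub_le _ _
      _ ≤ 2 * Mz := by linarith [hMz n, le_trans (PUnorm (zz n)) (hMz n)]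
  -- ## conclusion (ii) limit and (iii)
  have hTtit : ∀ n, Ttil^[n] x = RU (T^[n] w0) := fun n => Titer n x
  have concl2lim : Tendsto (fun n : ℕ => Ttil^[n] x - Ttil^[n+1] x) atTop (𝓝 (-v)) := by
    have h1 : ∀ n : ℕ, Ttil^[n] x - Ttil^[n+1] x = RU (e n) := by
      intro n
      rw [hTtit n, hTtit (n+1), RUlin]
    have h2 : Tendsto (fun n => RU (e n)) atTop (𝓝 (RU v)) := (RUcont.tendsto v).comp hetend
    rw [RUv] at h2
    exact h2.congr fun n => (h1 n).symm
  have hPUe0 : Tendsto (fun n => PU (e n)) atTop (𝓝 0) := by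
    have h1 : ∀ n, ‖PU (e n)‖ ≤ ‖e n - v‖ := by
      intro n
      have h2 : PU (e n) = PU (e n - v) := by simp only [PUsub, PUv, sub_zero]
      rw [h2]; exact PUnorm _
    rw [tendsto_zero_iff_norm_tendsto_zero]
    exact squeeze_zero (fun n => norm_nonneg _) h1 hEnorm
  have hproxTtil : ∀ n : ℕ, prox (Ttil^[n] x) = p n := by
    intro n; rw [hTtit n]
  have hPUTtil : ∀ n : ℕ, PU (Ttil^[n] x) = s n := by
    intro n; rw [hTtit n, PURU]
  have hpsn : ∀ n, p n = s n - e n := by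
    intro n; rw [hen n]; abel
  have concl3 : Tendsto (fun n : ℕ => PU (Ttil^[n] x) - PU (prox (Ttil^[n] x)))
      atTop (𝓝 0) := by
    have h1 : ∀ n : ℕ, PU (Ttil^[n] x) - PU (prox (Ttil^[n] x)) = PU (e n) := by
      intro n
      rw [hPUTtil n, hproxTtil n, hpsn n, PUsub]
      have h2 : PU (s n) = s n := by
        simp only [hs]; exact PUidem _
      rw [h2]; abel
    exact hPUe0.congr fun n => (h1 n).symm

  -- ## subgradients along the iteration
  have hun : ∀ n, (e n - (T^[n] w0 - s n)) ∈ ESubdiff g (p n) := by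
    intro n
    have h1 := prox_subgrad hgproper hgconv hprox (RU (T^[n] w0))
    have h6 : prox (RU (T^[n] w0)) = p n := by simp only [hp]
    rw [h6] at h1
    have h2 : RU (T^[n] w0) - p n = e n - (T^[n] w0 - s n) := by
      rw [hpsn n]
      have h3 : RU (T^[n] w0) = s n + s n - T^[n] w0 := by
        simp only [hs]
        rw [hRU (T^[n] w0), nsmul2]
      rw [h3]; abel
    rw [h2] at h1
    exact h1
  have hz0ne : g (z0 - v) ≠ ⊤ := esubdiff_ne_top hgproper hb0
  -- ## ytil is a fixed point of z ↦ T (z + v)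
  have hFclosed : IsClosed F := by
    rw [hF]
    exact isClosed_eq continuous_id (Tcont.comp (continuous_id.add continuous_const))
  have hytil' : Tendsto (fun n => PF (zz n)) atTop (𝓝 ytil) := by
    simp only [hzz]; exact hytil
  have hytilF : ytil = T (ytil + v) := by
    have h1 : ytil ∈ F := hFclosed.mem_of_tendsto hytil'
      (Filter.Eventually.of_forall fun n => (hPF _).1)
    rw [hF] at h1; exact h1
  obtain ⟨hbst, hbstO⟩ := hFsub ytil hytilF
  have hcstarU : PU ytil ∈ U := PUmem ytil
  have hcstar_min : ∀ u ∈ U, g (PU ytil - v) ≤ g (u - v) := by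
    intro u hu
    apply esubdiff_min hgproper hbst
    have h1 : (u - v) - (PU ytil - v) = u - PU ytil := by abel
    rw [h1]
    exact innerUperp _ (Submodule.sub_mem _ hu hcstarU) _ hbstO
  have hcstar_ne : g (PU ytil - v) ≠ ⊤ := esubdiff_ne_top hgproper hbst
  have hPUf_tend : Tendsto (fun n => PU (PF (zz n))) atTop (𝓝 (PU ytil)) :=
    (PUcont.tendsto ytil).comp hytil'
  -- ## the projection inequality for candidate limits
  have hprojineq : ∀ c : X, c ∈ U → g (c - v) ≤ g (z0 - v) →
      ∀ n, (⟪c - PU (PF (zz n)), s n - PU (PF (zz n))⟫ : ℝ) ≤ 0 := by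
    intro c hcU hcle n
    have hfnF : PF (zz n) = T (PF (zz n) + v) := by
      have h0 := (hPF (zz n)).1; rwa [hF] at h0
    obtain ⟨hbfn, hbfnO⟩ := hFsub _ hfnF
    have hble : g (c - v) ≤ g (PU (PF (zz n)) - v) := by
      rw [hminval _ hfnF]; exact hcle
    have hbc : (PU (PF (zz n)) - PF (zz n)) ∈ ESubdiff g (c - v) := by
      apply esubdiff_transfer hgproper hbfn hble
      have h1 : (PU (PF (zz n)) - v) - (c - v) = PU (PF (zz n)) - c := by abel
      rw [h1]
      exact innerUperp _ (Submodule.sub_mem _ (PUmem _) hcU) _ hbfnO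
    have hfc := hmk c (PU (PF (zz n)) - PF (zz n)) hcU hbfnO hbc
    have hmem : (c - (PU (PF (zz n)) - PF (zz n))) ∈ F := by rw [hF]; exact hfc
    have hproj := (hPF (zz n)).2 _ hmem
    have h1 : (c - (PU (PF (zz n)) - PF (zz n))) - PF (zz n) = c - PU (PF (zz n)) := by abel
    rw [h1] at hproj
    have h2 : (⟪c - PU (PF (zz n)), zz n - PF (zz n)⟫ : ℝ)
        = ⟪c - PU (PF (zz n)), s n - PU (PF (zz n))⟫ := by
      have hU : c - PU (PF (zz n)) ∈ U := Submodule.sub_mem _ hcU (PUmem _)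
      have h3 : zz n - PF (zz n)
          = (s n - PU (PF (zz n))) + ((zz n - PU (zz n)) - (PF (zz n) - PU (PF (zz n)))) := by
        rw [hPUzz n]; abel
      have h4 : ((zz n - PU (zz n)) - (PF (zz n) - PU (PF (zz n)))) ∈ Uᗮ :=
        Submodule.sub_mem _ (PUperp _) (PUperp _)
      rw [h3, inner_add_right, innerUperp _ hU _ h4, add_zero]
    rw [h2] at hproj
    exact hproj
  -- ## real bound for the values g (p n)
  have hsU : ∀ n, s n ∈ U := by intro n; simp only [hs]; exact PUmem _
  have hglb : ∀ n, (g (p n)).toReal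
      ≤ (g (z0 - v)).toReal + ((‖z0‖ + Mz) * ‖PU (e n)‖
        + ((2*Mz + ‖v‖) + 2*Mz) * ‖e n - v‖) := by
    intro n
    have hδ := esubdiff_real hgproper (hun n) hz0ne
    have hsplit : (⟪(z0 - v) - p n, e n - (T^[n] w0 - s n)⟫ : ℝ)
        = ⟪z0 - s n, PU (e n)⟫ + (⟪e n - v, e n⟫ - ⟪e n - v, zz n - PU (zz n)⟫
          + (n:ℝ) * ⟪e n - v, v⟫) := by
      have h1 : (z0 - v) - p n = (z0 - s n) + (e n - v) := by rw [hpsn n]; abel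
      have h2 : (⟪z0 - s n, e n - (T^[n] w0 - s n)⟫ : ℝ) = ⟪z0 - s n, PU (e n)⟫ := by
        have h3 : e n - (T^[n] w0 - s n) - PU (e n)
            = (e n - PU (e n)) - (T^[n] w0 - s n) := by abel
        have h4 : (T^[n] w0 - s n) ∈ Uᗮ := by
          have h5 : s n = PU (T^[n] w0) := by simp only [hs]
          rw [h5]; exact PUperp _
        have h6 : (e n - (T^[n] w0 - s n)) - PU (e n) ∈ Uᗮ := by
          rw [h3]; exact Submodule.sub_mem _ (PUperp _) h4
        have h7 : z0 - s n ∈ U := Submodule.sub_mem _ hz0U (hsU n)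
        have h8 : (⟪z0 - s n, (e n - (T^[n] w0 - s n)) - PU (e n)⟫ : ℝ) = 0 :=
          innerUperp _ h7 _ h6
        have h9 : (⟪z0 - s n, e n - (T^[n] w0 - s n)⟫ : ℝ)
            = ⟪z0 - s n, PU (e n)⟫ + ⟪z0 - s n, (e n - (T^[n] w0 - s n)) - PU (e n)⟫ := by
          rw [← inner_add_right]
          congr 1
          abel
        rw [h9, h8, add_zero]
      have h10 : T^[n] w0 - s n = (zz n - PU (zz n)) - (n:ℝ) • v := by
        rw [hPUzz n]
        simp only [hzz]
        abel
      have h11 : (⟪e n - v, e n - (T^[n] w0 - s n)⟫ : ℝ)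
          = ⟪e n - v, e n⟫ - ⟪e n - v, zz n - PU (zz n)⟫ + (n:ℝ) * ⟪e n - v, v⟫ := by
        rw [h10]
        simp only [inner_sub_right, real_inner_smul_right]
        ring
      rw [h1, inner_add_left, h2, h11]
    rw [hsplit] at hδ
    have hb1 : |(⟪z0 - s n, PU (e n)⟫ : ℝ)| ≤ (‖z0‖ + Mz) * ‖PU (e n)‖ := by
      refine le_trans (abs_real_inner_le_norm _ _) ?_
      refine mul_le_mul_of_nonneg_right ?_ (norm_nonneg _)
      calc ‖z0 - s n‖ ≤ ‖z0‖ + ‖s n‖ := norm_sub_le _ _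
        _ ≤ ‖z0‖ + Mz := by linarith [hMs n]
    have hb2 : |(⟪e n - v, e n⟫ : ℝ)| ≤ ‖e n - v‖ * (2*Mz + ‖v‖) := by
      refine le_trans (abs_real_inner_le_norm _ _) ?_
      exact mul_le_mul_of_nonneg_left (hMe n) (norm_nonneg _)
    have hb3 : |(⟪e n - v, zz n - PU (zz n)⟫ : ℝ)| ≤ ‖e n - v‖ * (2*Mz) := by
      refine le_trans (abs_real_inner_le_norm _ _) ?_
      exact mul_le_mul_of_nonneg_left (hMr n) (norm_nonneg _)
    have hb4 : 0 ≤ (n:ℝ) * ⟪e n - v, v⟫ := by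
      refine mul_nonneg (Nat.cast_nonneg n) ?_
      rw [real_inner_comm]; exact hvE n
    nlinarith [hδ, (abs_le.1 hb1).1, (abs_le.1 hb2).1, (abs_le.1 hb3).2, hb4]
  have hη : Tendsto (fun n => (‖z0‖ + Mz) * ‖PU (e n)‖
      + ((2*Mz + ‖v‖) + 2*Mz) * ‖e n - v‖) atTop (𝓝 0) := by
    have h1 : Tendsto (fun n => ‖PU (e n)‖) atTop (𝓝 0) :=
      tendsto_zero_iff_norm_tendsto_zero.1 hPUe0
    have h3 := (h1.const_mul (‖z0‖ + Mz)).add (hEnorm.const_mul ((2*Mz + ‖v‖) + 2*Mz))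
    simpa using h3
  -- ## the key ultrafilter argument
  have key : ∀ 𝒰 : Ultrafilter ℕ, (↑𝒰 : Filter ℕ) ≤ atTop →
      ∀ w : X, Tendsto (fun n => (⟪s n, w⟫ : ℝ)) ↑𝒰 (𝓝 ⟪PU ytil, w⟫) := by
    intro 𝒰 h𝒰
    obtain ⟨c, hc⟩ := exists_ultra_weak_limit 𝒰 s Mz hMs
    have hcU : c ∈ U := by
      rw [← Submodule.orthogonal_orthogonal U, Submodule.mem_orthogonal]
      intro u hu
      have h0 : ∀ n, (⟪s n, u⟫ : ℝ) = 0 := fun n => innerUperp _ (hsU n) _ hu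
      have h1 : Tendsto (fun n => (⟪s n, u⟫ : ℝ)) ↑𝒰 (𝓝 ⟪c, u⟫) := hc u
      have h2 : Tendsto (fun n => (⟪s n, u⟫ : ℝ)) ↑𝒰 (𝓝 0) := by
        simp only [h0]; exact tendsto_const_nhds
      have h3 : (⟪c, u⟫ : ℝ) = 0 := tendsto_nhds_unique h1 h2
      rw [real_inner_comm]; exact h3
    have hpweak : ∀ w : X, Tendsto (fun n => (⟪p n, w⟫ : ℝ)) ↑𝒰 (𝓝 ⟪c - v, w⟫) := by
      intro w
      have h1 : Tendsto (fun n => (⟪e n, w⟫ : ℝ)) atTop (𝓝 ⟪v, w⟫) :=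
        hetend.inner tendsto_const_nhds
      have h2 := (hc w).sub (h1.mono_left h𝒰)
      have h3 : (fun n => (⟪s n, w⟫ : ℝ) - ⟪e n, w⟫) = fun n => (⟪p n, w⟫ : ℝ) := by
        funext n; rw [← inner_sub_left, ← hpsn n]
      have h4 : (⟪c, w⟫ : ℝ) - ⟪v, w⟫ = ⟪c - v, w⟫ := (inner_sub_left _ _ _).symm
      rw [h3, h4] at h2
      exact h2
    have hcle : g (c - v) ≤ g (z0 - v) := by
      have key2 : ∀ ε : ℝ, 0 < ε → g (c - v) ≤ (((g (z0 - v)).toReal + ε : ℝ) : EReal) := by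
        intro ε hε
        have hev : ∀ᶠ n in (↑𝒰 : Filter ℕ),
            p n ∈ {y : X | g y ≤ (((g (z0 - v)).toReal + ε : ℝ) : EReal)} := by
          have h1 : ∀ᶠ n in atTop, (‖z0‖ + Mz) * ‖PU (e n)‖
              + ((2*Mz + ‖v‖) + 2*Mz) * ‖e n - v‖ < ε := hη.eventually_lt_const hε
          have h2 : ∀ᶠ n in (↑𝒰 : Filter ℕ), (‖z0‖ + Mz) * ‖PU (e n)‖
              + ((2*Mz + ‖v‖) + 2*Mz) * ‖e n - v‖ < ε := h𝒰 h1
          refine h2.mono fun n hn => ?_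
          have h3 : (g (p n)).toReal ≤ (g (z0 - v)).toReal + ε :=
            le_trans (hglb n) (by linarith)
          have h4 : g (p n) ≠ ⊤ := by
            simp only [hp]; exact prox_ne_top hgproper hprox _
          simp only [Set.mem_setOf_eq]
          rw [← EReal.coe_toReal h4 (hgproper.1 _)]
          exact_mod_cast h3
        have hSclosed : IsClosed {y : X | g y ≤ (((g (z0 - v)).toReal + ε : ℝ) : EReal)} := by
          rw [← isOpen_compl_iff, isOpen_iff_mem_nhds]
          intro y hy
          have hlt : (((g (z0 - v)).toReal + ε : ℝ) : EReal) < g y := not_le.1 hy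
          obtain ⟨β, hβ1, hβ2⟩ := exists_between hlt
          have h1 := hglsc y β hβ2
          refine Filter.mem_of_superset h1 fun y' hy' => ?_
          exact not_le.2 (lt_of_le_of_lt hβ1.le hy')
        have hSconv : Convex ℝ {y : X | g y ≤ (((g (z0 - v)).toReal + ε : ℝ) : EReal)} := by
          intro y1 hy1 y2 hy2 a b ha hb hab
          simp only [Set.mem_setOf_eq] at hy1 hy2 ⊢
          rcases eq_or_lt_of_le ha with ha0 | ha0
          · have hb1 : b = 1 := by linarith
            rw [← ha0, hb1, zero_smul, one_smul, zero_add]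
            exact hy2
          rcases eq_or_lt_of_le hb with hb0 | hb0
          · have ha1 : a = 1 := by linarith
            rw [← hb0, ha1, zero_smul, one_smul, add_zero]
            exact hy1
          · have h1 : g y1 ≠ ⊤ := fun h => EReal.coe_ne_top _ (top_le_iff.1 (h ▸ hy1))
            have h2 : g y2 ≠ ⊤ := fun h => EReal.coe_ne_top _ (top_le_iff.1 (h ▸ hy2))
            have hcv := hgconv y1 y2 a b ha hb hab
            have h3 : g (a • y1 + b • y2)
                ≤ ((a * (g y1).toReal + b * (g y2).toReal : ℝ) : EReal) := by
              rw [EReal.coe_add, EReal.coe_mul, EReal.coe_mul,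
                EReal.coe_toReal h1 (hgproper.1 _), EReal.coe_toReal h2 (hgproper.1 _)]
              exact hcv
            have h4 : (g y1).toReal ≤ (g (z0 - v)).toReal + ε := by
              have h6 := EReal.toReal_le_toReal hy1 (hgproper.1 _) (EReal.coe_ne_top _)
              rwa [EReal.toReal_coe] at h6
            have h5 : (g y2).toReal ≤ (g (z0 - v)).toReal + ε := by
              have h6 := EReal.toReal_le_toReal hy2 (hgproper.1 _) (EReal.coe_ne_top _)
              rwa [EReal.toReal_coe] at h6
            refine le_trans h3 ?_
            rw [EReal.coe_le_coe_iff]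
            have h7 := mul_le_mul_of_nonneg_left h4 ha0.le
            have h8 := mul_le_mul_of_nonneg_left h5 hb0.le
            have h9 : a * ((g (z0 - v)).toReal + ε) + b * ((g (z0 - v)).toReal + ε)
                = (g (z0 - v)).toReal + ε := by
              rw [← add_mul, hab, one_mul]
            linarith
        have hSne : Set.Nonempty {y : X | g y ≤ (((g (z0 - v)).toReal + ε : ℝ) : EReal)} := by
          refine ⟨z0 - v, ?_⟩
          simp only [Set.mem_setOf_eq]
          rw [← EReal.coe_toReal hz0ne (hgproper.1 _)]
          exact_mod_cast (by linarith : (g (z0 - v)).toReal ≤ (g (z0 - v)).toReal + ε)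
        exact mem_of_weak_tendsto hSclosed hSconv hSne hev hpweak
      have hne : g (c - v) ≠ ⊤ := by
        have h1 := key2 1 one_pos
        exact fun h => EReal.coe_ne_top _ (top_le_iff.1 (h ▸ h1))
      rw [← EReal.coe_toReal hne (hgproper.1 _), ← EReal.coe_toReal hz0ne (hgproper.1 _),
        EReal.coe_le_coe_iff]
      apply real_le_of_forall_pos_le_add'
      intro ε hε
      have h2 := key2 ε hε
      have h3 := EReal.toReal_le_toReal h2 (hgproper.1 _) (EReal.coe_ne_top _)
      rwa [EReal.toReal_coe] at h3
    -- identification c = PU ytil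
    have hineq := hprojineq c hcU hcle
    have hfn_t : Tendsto (fun n => PU (PF (zz n))) ↑𝒰 (𝓝 (PU ytil)) :=
      hPUf_tend.mono_left h𝒰
    have t1 : Tendsto (fun n => (⟪c, s n⟫ : ℝ)) ↑𝒰 (𝓝 ⟪c, c⟫) :=
      (hc c).congr fun n => real_inner_comm _ _
    have t2 : Tendsto (fun n => (⟪c, PU (PF (zz n))⟫ : ℝ)) ↑𝒰 (𝓝 ⟪c, PU ytil⟫) :=
      tendsto_const_nhds.inner hfn_t
    have t4 : Tendsto (fun n => (⟪PU (PF (zz n)), PU (PF (zz n))⟫ : ℝ)) ↑𝒰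
        (𝓝 ⟪PU ytil, PU ytil⟫) := hfn_t.inner hfn_t
    have t3b : Tendsto (fun n => (⟪s n, PU (PF (zz n)) - PU ytil⟫ : ℝ)) ↑𝒰 (𝓝 0) := by
      have h1 : ∀ n, |(⟪s n, PU (PF (zz n)) - PU ytil⟫ : ℝ)|
          ≤ Mz * ‖PU (PF (zz n)) - PU ytil‖ := by
        intro n
        refine le_trans (abs_real_inner_le_norm _ _) ?_
        exact mul_le_mul_of_nonneg_right (hMs n) (norm_nonneg _)
      have h2 : Tendsto (fun n => ‖PU (PF (zz n)) - PU ytil‖) ↑𝒰 (𝓝 0) :=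
        tendsto_iff_norm_sub_tendsto_zero.1 hfn_t
      have h4 : Tendsto (fun n => Mz * ‖PU (PF (zz n)) - PU ytil‖) ↑𝒰 (𝓝 0) := by
        have h5 := h2.const_mul Mz; simpa using h5
      exact squeeze_zero_norm h1 h4
    have t3 : Tendsto (fun n => (⟪s n, PU (PF (zz n))⟫ : ℝ)) ↑𝒰 (𝓝 ⟪c, PU ytil⟫) := by
      have h1 := (hc (PU ytil)).add t3b
      have h2 : (fun n => (⟪s n, PU ytil⟫ : ℝ) + ⟪s n, PU (PF (zz n)) - PU ytil⟫)
          = fun n => (⟪s n, PU (PF (zz n))⟫ : ℝ) := by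
        funext n; rw [← inner_add_right]
        congr 1
        abel
      rw [h2] at h1
      simpa using h1
    have hαlim : Tendsto (fun n => (⟪c - PU (PF (zz n)), s n - PU (PF (zz n))⟫ : ℝ)) ↑𝒰
        (𝓝 (⟪c - PU ytil, c - PU ytil⟫)) := by
      have h1 : ∀ n, (⟪c - PU (PF (zz n)), s n - PU (PF (zz n))⟫ : ℝ)
          = ⟪c, s n⟫ - ⟪c, PU (PF (zz n))⟫ - ⟪s n, PU (PF (zz n))⟫
            + ⟪PU (PF (zz n)), PU (PF (zz n))⟫ := by
        intro n
        rw [inner_sub_left, inner_sub_right, inner_sub_right,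
          real_inner_comm (PU (PF (zz n))) (s n)]
        ring
      have h2 := ((t1.sub t2).sub t3).add t4
      have h3 : (⟪c, c⟫ : ℝ) - ⟪c, PU ytil⟫ - ⟪c, PU ytil⟫ + ⟪PU ytil, PU ytil⟫
          = ⟪c - PU ytil, c - PU ytil⟫ := by
        rw [inner_sub_left, inner_sub_right, inner_sub_right, real_inner_comm (PU ytil) c]
        ring
      rw [h3] at h2
      exact h2.congr fun n => (h1 n).symm
    have hle0 : (⟪c - PU ytil, c - PU ytil⟫ : ℝ) ≤ 0 :=
      le_of_tendsto hαlim (Filter.Eventually.of_forall hineq)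
    have hceq : c = PU ytil := by
      have h1 : c - PU ytil = 0 :=
        inner_self_eq_zero.1 (le_antisymm hle0 real_inner_self_nonneg)
      exact sub_eq_zero.1 h1
    intro w
    rw [← hceq]
    exact hc w
  -- ## assembling the conclusions
  have concl4 : ∀ w : X, Tendsto (fun n : ℕ => (⟪PU (Ttil^[n] x), w⟫ : ℝ)) atTop
      (𝓝 ⟪PU ytil, w⟫) := by
    intro w
    have h1 : Tendsto (fun n => (⟪s n, w⟫ : ℝ)) atTop (𝓝 ⟪PU ytil, w⟫) := by
      rw [tendsto_iff_ultrafilter]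
      intro 𝒰 h𝒰
      exact key 𝒰 h𝒰 w
    exact h1.congr fun n => by rw [hPUTtil n]
  have concl5 : ∀ w : X, Tendsto (fun n : ℕ => (⟪prox (Ttil^[n] x), w⟫ : ℝ)) atTop
      (𝓝 ⟪PU ytil - v, w⟫) := by
    intro w
    have h1 : Tendsto (fun n => (⟪s n, w⟫ : ℝ) - ⟪e n, w⟫) atTop
        (𝓝 ((⟪PU ytil, w⟫ : ℝ) - ⟪v, w⟫)) := by
      refine Tendsto.sub ?_ (hetend.inner tendsto_const_nhds)
      rw [tendsto_iff_ultrafilter]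
      intro 𝒰 h𝒰
      exact key 𝒰 h𝒰 w
    have h2 : (⟪PU ytil, w⟫ : ℝ) - ⟪v, w⟫ = ⟪PU ytil - v, w⟫ := (inner_sub_left _ _ _).symm
    rw [h2] at h1
    refine h1.congr fun n => ?_
    rw [hproxTtil n, hpsn n]
    simp only [he, inner_sub_left]
  exact ⟨concl1, concl2, concl2lim, concl3, concl4, hcstarU, hcstar_min, concl5, hcstar_ne⟩
end
end
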